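/- arXiv:2111.00114 — 7 statements merged into one kernel-verified Lean document; each statement's English description precedes it below -/
import Mathlib

section
/- Let a ≥ 0, b ≥ 0, c > 0, d > 0 be constants with 2c < d, and let φ : [r₁, r₂] → ℝ be a continuous nonnegative function satisfying φ(t) ≤ a + b(e^{-d(t-r₁)} + e^{-d(r₂-t)}) + c ∫_{r₁}^{r₂} e^{-d|t-s|} φ(s) ds for all t ∈ [r₁, r₂]. Then φ(t) ≤ ad/(d-2c) + (b/c)(d-h)(e^{-h(t-r₁)} + e^{-h(r₂-t)}) for all t ∈ [r₁, r₂], where h = √(d² - 2cd). -/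
open MeasureTheory intervalIntegral
set_option maxHeartbeats 1000000

lemma exp_int (k m p q : ℝ) (hk : k ≠ 0) :
    ∫ s in p..q, Real.exp (k*s + m) = (Real.exp (k*q + m) - Real.exp (k*p + m))/k := by
  have h1 : ∀ s, Real.exp (k*s + m) = Real.exp m * Real.exp (k*s) := by
    intro s; rw [← Real.exp_add]; ring_nf
  simp only [h1]
  rw [intervalIntegral.integral_const_mul]
  have h2 : (∫ s in p..q, Real.exp (k*s)) = (Real.exp (k*q) - Real.exp (k*p))/k := by
    rw [intervalIntegral.integral_comp_mul_left (fun x => Real.exp x) hk,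
      integral_exp, smul_eq_mul]
    field_simp
  rw [h2]; ring

lemma ii_exp (C k m p q : ℝ) : IntervalIntegrable (fun s => C * Real.exp (k*s+m)) volume p q := by
  apply Continuous.intervalIntegrable; fun_prop

/-- Gronwall–Coppel type inequality with symmetric exponential kernel. -/
theorem stmt0 (a b c d r₁ r₂ : ℝ) (hr : r₁ < r₂)
    (ha : 0 ≤ a) (hb : 0 ≤ b) (hc : 0 < c) (hd : 0 < d) (hcd : 2 * c < d)
    (φ : ℝ → ℝ) (hφcont : ContinuousOn φ (Set.Icc r₁ r₂))
    (hφnn : ∀ t ∈ Set.Icc r₁ r₂, 0 ≤ φ t)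
    (hineq : ∀ t ∈ Set.Icc r₁ r₂,
      φ t ≤ a + b * (Real.exp (-d * (t - r₁)) + Real.exp (-d * (r₂ - t)))
          + c * ∫ s in r₁..r₂, Real.exp (-d * |t - s|) * φ s) :
    ∀ t ∈ Set.Icc r₁ r₂,
      φ t ≤ a * d / (d - 2 * c)
          + (b / c) * (d - Real.sqrt (d ^ 2 - 2 * c * d))
            * (Real.exp (-Real.sqrt (d ^ 2 - 2 * c * d) * (t - r₁))
               + Real.exp (-Real.sqrt (d ^ 2 - 2 * c * d) * (r₂ - t))) := by
  set h := Real.sqrt (d ^ 2 - 2 * c * d) with hdef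
  have hdd : 0 < d^2 - 2*c*d := by nlinarith
  have hsq : h^2 = d^2 - 2*c*d := Real.sq_sqrt hdd.le
  have hhpos : 0 < h := Real.sqrt_pos.mpr hdd
  have hhd : h < d := by
    apply lt_of_pow_lt_pow_left₀ 2 hd.le
    nlinarith
  have hd0 : d ≠ 0 := hd.ne'
  have hdhpos : 0 < d - h := by linarith
  have hdh : d - h ≠ 0 := hdhpos.ne'
  have hdhp : 0 < d + h := by linarith
  have hdh' : d + h ≠ 0 := hdhp.ne'
  have hd2c : 0 < d - 2*c := by linarith
  set A := a*d^2/h^2 with hAdef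
  set B := 2*b*d/(d+h) with hBdef
  have hAnn : 0 ≤ A := by positivity
  have hBnn : 0 ≤ B := by positivity
  have hA : a * d / (d - 2*c) = A := by
    rw [hAdef, div_eq_div_iff hd2c.ne' (by positivity)]
    linear_combination (a*d)*hsq
  have hB : (b/c) * (d - h) = B := by
    rw [hBdef, div_mul_eq_mul_div, div_eq_div_iff hc.ne' hdh']
    linear_combination -b*hsq
  have hc2 : c = (d^2 - h^2)/(2*d) := by
    rw [eq_div_iff (by positivity)]
    linear_combination hsq
  set ψ : ℝ → ℝ := fun x => A + B*(Real.exp (-h*(x-r₁)) + Real.exp (-h*(r₂-x))) with hψdef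
  have hψc : Continuous ψ := by rw [hψdef]; fun_prop
  -- key computation of the integral of the kernel against ψ
  have key : ∀ t ∈ Set.Icc r₁ r₂,
      (∫ s in r₁..r₂, Real.exp (-d * |t - s|) * ψ s)
        = A*(1 - Real.exp (-d*(t-r₁)))/d
          + B*(Real.exp (-h*(t-r₁)) - Real.exp (-d*(t-r₁)))/(d-h)
          + B*(Real.exp (-h*(r₂-t)) - Real.exp (-d*(t-r₁))*(Real.exp (-h*(t-r₁))*Real.exp (-h*(r₂-t))))/(d+h)
          + (A*(1 - Real.exp (-d*(r₂-t)))/d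
          + B*(Real.exp (-h*(t-r₁)) - Real.exp (-d*(r₂-t))*(Real.exp (-h*(t-r₁))*Real.exp (-h*(r₂-t))))/(d+h)
          + B*(Real.exp (-h*(r₂-t)) - Real.exp (-d*(r₂-t)))/(d-h)) := by
    intro t ht
    have hii1 : IntervalIntegrable (fun s => Real.exp (-d * |t - s|) * ψ s) volume r₁ t := by
      apply Continuous.intervalIntegrable
      exact (Real.continuous_exp.comp (by fun_prop)).mul hψc
    have hii2 : IntervalIntegrable (fun s => Real.exp (-d * |t - s|) * ψ s) volume t r₂ := by
      apply Continuous.intervalIntegrable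
      exact (Real.continuous_exp.comp (by fun_prop)).mul hψc
    rw [← intervalIntegral.integral_add_adjacent_intervals hii1 hii2]
    have habs1 : Set.EqOn (fun s => Real.exp (-d * |t - s|) * ψ s)
        (fun s => Real.exp (-d*(t-s)) * ψ s) (Set.uIcc r₁ t) := by
      intro s hs
      rw [Set.uIcc_of_le ht.1] at hs
      simp only
      rw [abs_of_nonneg (by linarith [hs.2] : (0:ℝ) ≤ t - s)]
    have habs2 : Set.EqOn (fun s => Real.exp (-d * |t - s|) * ψ s)
        (fun s => Real.exp (-d*(s-t)) * ψ s) (Set.uIcc t r₂) := by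
      intro s hs
      rw [Set.uIcc_of_le ht.2] at hs
      simp only
      rw [abs_of_nonpos (by linarith [hs.1] : t - s ≤ 0), neg_sub]
    rw [intervalIntegral.integral_congr habs1, intervalIntegral.integral_congr habs2]
    have hexp1 : ∀ s:ℝ, Real.exp (-d*(t-s)) * ψ s
        = A * Real.exp (d*s + -(d*t)) + B * Real.exp ((d-h)*s + (h*r₁ - d*t))
          + B * Real.exp ((d+h)*s + (-(h*r₂) - d*t)) := by
      intro s
      rw [hψdef]
      rw [show (d*s + -(d*t)) = -d*(t-s) by ring,
          show ((d-h)*s + (h*r₁ - d*t)) = -d*(t-s) + -h*(s-r₁) by ring,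
          show ((d+h)*s + (-(h*r₂) - d*t)) = -d*(t-s) + -h*(r₂-s) by ring,
          Real.exp_add, Real.exp_add]
      ring
    have hexp2 : ∀ s:ℝ, Real.exp (-d*(s-t)) * ψ s
        = A * Real.exp (-d*s + d*t) + B * Real.exp (-(d+h)*s + (d*t + h*r₁))
          + B * Real.exp ((h-d)*s + (d*t - h*r₂)) := by
      intro s
      rw [hψdef]
      rw [show (-d*s + d*t) = -d*(s-t) by ring,
          show (-(d+h)*s + (d*t + h*r₁)) = -d*(s-t) + -h*(s-r₁) by ring,
          show ((h-d)*s + (d*t - h*r₂)) = -d*(s-t) + -h*(r₂-s) by ring,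
          Real.exp_add, Real.exp_add]
      ring
    have hL : (∫ s in r₁..t, Real.exp (-d*(t-s)) * ψ s)
        = A*(1 - Real.exp (-d*(t-r₁)))/d
          + B*(Real.exp (-h*(t-r₁)) - Real.exp (-d*(t-r₁)))/(d-h)
          + B*(Real.exp (-h*(r₂-t)) - Real.exp (-d*(t-r₁))*(Real.exp (-h*(t-r₁))*Real.exp (-h*(r₂-t))))/(d+h) := by
      simp only [hexp1]
      rw [intervalIntegral.integral_add ((ii_exp A d (-(d*t)) r₁ t).add (ii_exp B (d-h) (h*r₁-d*t) r₁ t)) (ii_exp B (d+h) (-(h*r₂)-d*t) r₁ t),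
          intervalIntegral.integral_add (ii_exp A d (-(d*t)) r₁ t) (ii_exp B (d-h) (h*r₁-d*t) r₁ t),
          intervalIntegral.integral_const_mul, intervalIntegral.integral_const_mul,
          intervalIntegral.integral_const_mul,
          exp_int d _ _ _ hd0, exp_int (d-h) _ _ _ hdh, exp_int (d+h) _ _ _ hdh']
      rw [show d*t + -(d*t) = (0:ℝ) by ring, Real.exp_zero,
          show d*r₁ + -(d*t) = -d*(t-r₁) by ring,
          show (d-h)*t + (h*r₁-d*t) = -h*(t-r₁) by ring,
          show (d-h)*r₁ + (h*r₁-d*t) = -d*(t-r₁) by ring,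
          show (d+h)*t + (-(h*r₂)-d*t) = -h*(r₂-t) by ring,
          show (d+h)*r₁ + (-(h*r₂)-d*t) = -d*(t-r₁) + (-h*(t-r₁) + -h*(r₂-t)) by ring,
          Real.exp_add, Real.exp_add]
      ring
    have hR : (∫ s in t..r₂, Real.exp (-d*(s-t)) * ψ s)
        = A*(1 - Real.exp (-d*(r₂-t)))/d
          + B*(Real.exp (-h*(t-r₁)) - Real.exp (-d*(r₂-t))*(Real.exp (-h*(t-r₁))*Real.exp (-h*(r₂-t))))/(d+h)
          + B*(Real.exp (-h*(r₂-t)) - Real.exp (-d*(r₂-t)))/(d-h) := by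
      simp only [hexp2]
      rw [intervalIntegral.integral_add ((ii_exp A (-d) (d*t) t r₂).add (ii_exp B (-(d+h)) (d*t+h*r₁) t r₂)) (ii_exp B (h-d) (d*t-h*r₂) t r₂),
          intervalIntegral.integral_add (ii_exp A (-d) (d*t) t r₂) (ii_exp B (-(d+h)) (d*t+h*r₁) t r₂),
          intervalIntegral.integral_const_mul, intervalIntegral.integral_const_mul,
          intervalIntegral.integral_const_mul,
          exp_int (-d) _ _ _ (neg_ne_zero.mpr hd0), exp_int (-(d+h)) _ _ _ (neg_ne_zero.mpr hdh'),
          exp_int (h-d) _ _ _ (sub_ne_zero.mpr hhd.ne)]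
      rw [show -d*r₂ + d*t = -d*(r₂-t) by ring,
          show -d*t + d*t = (0:ℝ) by ring, Real.exp_zero,
          show -(d+h)*r₂ + (d*t + h*r₁) = -d*(r₂-t) + (-h*(t-r₁) + -h*(r₂-t)) by ring,
          show -(d+h)*t + (d*t + h*r₁) = -h*(t-r₁) by ring,
          show (h-d)*r₂ + (d*t - h*r₂) = -d*(r₂-t) by ring,
          show (h-d)*t + (d*t - h*r₂) = -h*(r₂-t) by ring,
          Real.exp_add, Real.exp_add]
      rw [show h - d = -(d - h) by ring, div_neg, div_neg, div_neg]
      ring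
    rw [hL, hR]
  -- key inequality : T ψ ≤ ψ
  have key1 : ∀ t ∈ Set.Icc r₁ r₂,
      a + b * (Real.exp (-d * (t - r₁)) + Real.exp (-d * (r₂ - t)))
        + c * (∫ s in r₁..r₂, Real.exp (-d * |t - s|) * ψ s) ≤ ψ t := by
    intro t ht
    rw [key t ht, hψdef]
    simp only
    set E1 := Real.exp (-d*(t-r₁)) with hE1
    set E2 := Real.exp (-d*(r₂-t)) with hE2
    set E3 := Real.exp (-h*(t-r₁)) with hE3
    set E4 := Real.exp (-h*(r₂-t)) with hE4
    have hgoal : (A + B*(E3 + E4)) -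
        (a + b * (E1 + E2)
        + c * (A*(1 - E1)/d + B*(E3 - E1)/(d-h) + B*(E4 - E1*(E3*E4))/(d+h)
          + (A*(1 - E2)/d + B*(E3 - E2*(E3*E4))/(d+h) + B*(E4 - E2)/(d-h))))
        = (E1 + E2) * (c*A/d + c*B*(E3*E4)/(d+h)) := by
      rw [hc2, hAdef, hBdef]
      have hh0 : h ≠ 0 := hhpos.ne'
      field_simp
      ring
    have hE1p : (0:ℝ) < E1 := Real.exp_pos _
    have hE2p : (0:ℝ) < E2 := Real.exp_pos _
    have hE3p : (0:ℝ) < E3 := Real.exp_pos _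
    have hE4p : (0:ℝ) < E4 := Real.exp_pos _
    have hnn : 0 ≤ (E1 + E2) * (c*A/d + c*B*(E3*E4)/(d+h)) := by
      apply mul_nonneg (by linarith)
      apply add_nonneg
      · exact div_nonneg (mul_nonneg hc.le hAnn) hd.le
      · exact div_nonneg (mul_nonneg (mul_nonneg hc.le hBnn) (mul_nonneg hE3p.le hE4p.le)) hdhp.le
    linarith [hgoal, hnn]
  -- comparison argument
  suffices hle : ∀ t ∈ Set.Icc r₁ r₂, φ t ≤ ψ t by
    intro t ht
    rw [hA, hB]
    have hψt : ψ t = A + B * (Real.exp (-h*(t-r₁)) + Real.exp (-h*(r₂-t))) := by rw [hψdef]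
    calc φ t ≤ ψ t := hle t ht
      _ = _ := by rw [hψt]
  obtain ⟨t₀, ht₀, hmax⟩ := isCompact_Icc.exists_isMaxOn ⟨r₁, Set.left_mem_Icc.mpr hr.le⟩
    (hφcont.sub hψc.continuousOn)
  intro t ht
  have hmt : φ t - ψ t ≤ φ t₀ - ψ t₀ := hmax ht
  suffices hM0 : φ t₀ - ψ t₀ ≤ 0 by linarith
  by_contra hMc
  push_neg at hMc
  have hKφ : IntervalIntegrable (fun s => Real.exp (-d * |t₀ - s|) * φ s) volume r₁ r₂ := by
    apply ContinuousOn.intervalIntegrable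
    rw [Set.uIcc_of_le hr.le]
    exact ((Real.continuous_exp.comp (by fun_prop)).continuousOn).mul hφcont
  have hKψ : IntervalIntegrable (fun s => Real.exp (-d * |t₀ - s|) * ψ s) volume r₁ r₂ := by
    apply Continuous.intervalIntegrable
    exact (Real.continuous_exp.comp (by fun_prop)).mul hψc
  set M := φ t₀ - ψ t₀ with hMdef
  set I := ∫ s in r₁..r₂, Real.exp (-d * |t₀ - s|) with hIdef
  have h1 := hineq t₀ ht₀
  have h2 := key1 t₀ ht₀
  have h3 : M ≤ c * ((∫ s in r₁..r₂, Real.exp (-d * |t₀ - s|) * φ s)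
      - (∫ s in r₁..r₂, Real.exp (-d * |t₀ - s|) * ψ s)) := by
    rw [mul_sub, hMdef]; linarith
  have h4 : (∫ s in r₁..r₂, Real.exp (-d * |t₀ - s|) * φ s)
      - (∫ s in r₁..r₂, Real.exp (-d * |t₀ - s|) * ψ s)
      = ∫ s in r₁..r₂, (Real.exp (-d * |t₀ - s|) * φ s - Real.exp (-d * |t₀ - s|) * ψ s) :=
    (intervalIntegral.integral_sub hKφ hKψ).symm
  have h5 : (∫ s in r₁..r₂, (Real.exp (-d * |t₀ - s|) * φ s - Real.exp (-d * |t₀ - s|) * ψ s))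
      ≤ ∫ s in r₁..r₂, Real.exp (-d * |t₀ - s|) * M := by
    apply intervalIntegral.integral_mono_on hr.le (hKφ.sub hKψ)
    · exact Continuous.intervalIntegrable (by fun_prop) _ _
    · intro s hs
      have hms : φ s - ψ s ≤ M := hmax hs
      have hep := (Real.exp_pos (-d * |t₀ - s|)).le
      nlinarith
  have h6 : (∫ s in r₁..r₂, Real.exp (-d * |t₀ - s|) * M) = I * M :=
    intervalIntegral.integral_mul_const _ _
  have hI0nn : 0 ≤ I :=
    intervalIntegral.integral_nonneg hr.le (fun u hu => (Real.exp_pos _).le)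
  have hI0 : I ≤ 2/d := by
    rw [hIdef]
    have hiiI1 : IntervalIntegrable (fun s => Real.exp (-d * |t₀ - s|)) volume r₁ t₀ :=
      Continuous.intervalIntegrable (by fun_prop) _ _
    have hiiI2 : IntervalIntegrable (fun s => Real.exp (-d * |t₀ - s|)) volume t₀ r₂ :=
      Continuous.intervalIntegrable (by fun_prop) _ _
    rw [← intervalIntegral.integral_add_adjacent_intervals hiiI1 hiiI2]
    have e1 : Set.EqOn (fun s => Real.exp (-d * |t₀ - s|))
        (fun s => Real.exp (d*s + -(d*t₀))) (Set.uIcc r₁ t₀) := by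
      intro s hs
      rw [Set.uIcc_of_le ht₀.1] at hs
      simp only
      rw [abs_of_nonneg (by linarith [hs.2] : (0:ℝ) ≤ t₀ - s)]
      congr 1; ring
    have e2 : Set.EqOn (fun s => Real.exp (-d * |t₀ - s|))
        (fun s => Real.exp (-d*s + d*t₀)) (Set.uIcc t₀ r₂) := by
      intro s hs
      rw [Set.uIcc_of_le ht₀.2] at hs
      simp only
      rw [abs_of_nonpos (by linarith [hs.1] : t₀ - s ≤ 0)]
      congr 1; ring
    rw [intervalIntegral.integral_congr e1, intervalIntegral.integral_congr e2,
        exp_int d _ _ _ hd0, exp_int (-d) _ _ _ (neg_ne_zero.mpr hd0),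
        show d*t₀ + -(d*t₀) = (0:ℝ) by ring, show -d*t₀ + d*t₀ = (0:ℝ) by ring, Real.exp_zero]
    have hx := Real.exp_pos (d*r₁ + -(d*t₀))
    have hy := Real.exp_pos (-d*r₂ + d*t₀)
    rw [div_neg, show (1 - Real.exp (d*r₁ + -(d*t₀)))/d +
        -((Real.exp (-d*r₂ + d*t₀) - 1)/d)
        = (2 - Real.exp (d*r₁ + -(d*t₀)) - Real.exp (-d*r₂ + d*t₀))/d by ring]
    exact div_le_div_of_nonneg_right (by linarith) hd.le
  have hD : (∫ s in r₁..r₂, Real.exp (-d * |t₀ - s|) * φ s)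
      - (∫ s in r₁..r₂, Real.exp (-d * |t₀ - s|) * ψ s) ≤ I * M := by
    rw [h4]; exact h5.trans (le_of_eq h6)
  have hchain : M ≤ c * (I * M) := h3.trans (mul_le_mul_of_nonneg_left hD hc.le)
  have h7 : c * (I * M) ≤ c * ((2/d) * M) :=
    mul_le_mul_of_nonneg_left (mul_le_mul_of_nonneg_right hI0 hMc.le) hc.le
  have h8 : c * ((2/d) * M) < M := by
    rw [show c*((2/d)*M) = (2*c*M)/d by ring, div_lt_iff₀ hd]
    nlinarith
  exact absurd (lt_of_le_of_lt (hchain.trans h7) h8) (lt_irrefl M)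
end

section
/- Suppose A₊ is an r×r real matrix all of whose eigenvalues have positive real part and A₋ is a (p-r)×(p-r) real matrix all of whose eigenvalues have negative real part, with constants N ≥ 1, γ > 0 such that ‖e^{A₊t}‖ ≤ N e^{γt} for t ≤ 0 and ‖e^{A₋t}‖ ≤ N e^{-γt} for t ≥ 0. Let F : ℝ × ℝ^p → ℝ^p be bounded by M and Lipschitz in the second variable with constant L (measurable/piecewise continuous in t), written componentwise as F = (F₊, F₋). If √2·N·L < γ, then there exists a unique bounded continuous function φ = (φ₊, φ₋) : ℝ → ℝ^p satisfying φ₊(t) = -∫_t^∞ e^{A₊(t-s)} F₊(s, φ(s)) ds and φ₋(t) = ∫_{-∞}^t e^{A₋(t-s)} F₋(s, φ(s)) ds, and moreover sup_{t∈ℝ} ‖φ(t)‖ ≤ √2·N·M/γ. -/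
open MeasureTheory Filter Set Topology
set_option maxHeartbeats 1000000
set_option synthInstance.maxHeartbeats 400000

namespace HypAux


lemma sqrt_le_sqrt2_mul_max {a b : ℝ} (ha : 0 ≤ a) (hb : 0 ≤ b) :
    Real.sqrt (a ^ 2 + b ^ 2) ≤ Real.sqrt 2 * max a b := by
  have hm : 0 ≤ max a b := le_trans ha (le_max_left _ _)
  have : a ^ 2 + b ^ 2 ≤ 2 * max a b ^ 2 := by
    rcases max_cases a b with ⟨h1, h2⟩ | ⟨h1, h2⟩ <;> nlinarith
  calc Real.sqrt (a ^ 2 + b ^ 2) ≤ Real.sqrt (2 * max a b ^ 2) := Real.sqrt_le_sqrt this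
    _ = Real.sqrt 2 * max a b := by
        rw [Real.sqrt_mul (by norm_num), Real.sqrt_sq hm]

lemma left_le_sqrt {a b : ℝ} (ha : 0 ≤ a) : a ≤ Real.sqrt (a ^ 2 + b ^ 2) :=
  (Real.le_sqrt ha (by positivity)).mpr (by nlinarith [sq_nonneg b])

lemma right_le_sqrt {a b : ℝ} (hb : 0 ≤ b) : b ≤ Real.sqrt (a ^ 2 + b ^ 2) :=
  (Real.le_sqrt hb (by positivity)).mpr (by nlinarith [sq_nonneg a])

lemma integrableOn_exp_shift {γ : ℝ} (hγ : 0 < γ) (t : ℝ) :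
    IntegrableOn (fun s => Real.exp (γ * (t - s))) (Ici t) := by
  rw [integrableOn_Ici_iff_integrableOn_Ioi]
  have h : IntegrableOn (fun s : ℝ => Real.exp (γ * t) * Real.exp (-γ * s)) (Ioi t) :=
    (exp_neg_integrableOn_Ioi t hγ).const_mul (Real.exp (γ * t))
  refine h.congr_fun (fun s _ => ?_) measurableSet_Ioi
  beta_reduce; rw [← Real.exp_add]; ring_nf

lemma integral_exp_shift {γ : ℝ} (hγ : 0 < γ) (t : ℝ) :
    ∫ s in Ici t, Real.exp (γ * (t - s)) = 1 / γ := by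
  rw [integral_Ici_eq_integral_Ioi]
  have hd : ∀ x : ℝ, HasDerivAt (fun s => -γ⁻¹ * Real.exp (γ * (t - s)))
      (Real.exp (γ * (t - x))) x := by
    intro x
    have h1 : HasDerivAt (fun s : ℝ => γ * (t - s)) (γ * (-1)) x :=
      ((hasDerivAt_id x).const_sub t).const_mul γ
    have h2 := (Real.hasDerivAt_exp (γ * (t - x))).comp x h1
    have h3 := h2.const_mul (-γ⁻¹)
    refine h3.congr_deriv ?_
    linear_combination (Real.exp (γ * (t - x))) * (inv_mul_cancel₀ hγ.ne')
  have htend : Tendsto (fun s => -γ⁻¹ * Real.exp (γ * (t - s))) atTop (𝓝 0) := by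
    have hb : Tendsto (fun s : ℝ => γ * (t - s)) atTop atBot := by
      apply Tendsto.const_mul_atBot hγ
      exact (tendsto_atBot_add_const_left atTop t tendsto_neg_atTop_atBot).congr
        (fun s => (sub_eq_add_neg t s).symm)
    have := (Real.tendsto_exp_atBot.comp hb).const_mul (-γ⁻¹)
    simpa using this
  have := integral_Ioi_of_hasDerivAt_of_tendsto' (fun x _ => hd x)
    ((integrableOn_exp_shift hγ t).mono_set Ioi_subset_Ici_self) htend
  rw [this]
  simp

lemma integrableOn_comp_neg {E : Type*} [NormedAddCommGroup E] {q : ℝ → E} {c : ℝ}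
    (h : IntegrableOn q (Ici (-c))) : IntegrableOn (fun s => q (-s)) (Iic c) := by
  have m : MeasurableEmbedding fun x : ℝ => -x :=
    (Homeomorph.neg ℝ).measurableEmbedding
  have h2 : IntegrableOn (fun s => q (-s)) (Iic c) (Measure.map (fun x : ℝ => -x) volume) := by
    rw [m.integrableOn_map_iff]
    simp_rw [Function.comp_def, neg_neg, neg_preimage, neg_Iic]
    exact h
  rwa [Measure.map_neg_eq_self (volume : Measure ℝ)] at h2

lemma continuous_integral_Iic {E : Type*} [NormedAddCommGroup E] [NormedSpace ℝ E]
    {q : ℝ → E} (hq : ∀ t : ℝ, IntegrableOn q (Iic t)) :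
    Continuous fun t => ∫ s in Iic t, q s := by
  have hint : ∀ a b : ℝ, IntervalIntegrable q volume a b := fun a b =>
    ⟨(hq (max a b)).mono_set (fun x hx => le_trans hx.2 (le_max_right a b)),
     (hq (max a b)).mono_set (fun x hx => le_trans hx.2 (le_max_left a b))⟩
  have : (fun t => ∫ s in Iic t, q s) =
      fun t => (∫ s in Iic 0, q s) + ∫ s in (0:ℝ)..t, q s := by
    funext t
    rw [← intervalIntegral.integral_Iic_sub_Iic (hq 0) (hq t)]
    abel
  rw [this]
  exact continuous_const.add (intervalIntegral.continuous_primitive hint 0)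

lemma continuous_integral_Ici {E : Type*} [NormedAddCommGroup E] [NormedSpace ℝ E]
    {q : ℝ → E} (hq : ∀ t : ℝ, IntegrableOn q (Ici t)) :
    Continuous fun t => ∫ s in Ici t, q s := by
  have key : ∀ t : ℝ, (∫ s in Ici t, q s) = ∫ s in Iic (-t), q (-s) := by
    intro t
    rw [integral_comp_neg_Iic, neg_neg, integral_Ici_eq_integral_Ioi]
  simp only [key]
  have hcont := continuous_integral_Iic (q := fun s => q (-s))
    (fun c => integrableOn_comp_neg (hq (-c)))
  exact hcont.comp continuous_neg


section core
variable {E : Type*} [NormedAddCommGroup E] [NormedSpace ℝ E] [CompleteSpace E]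
variable {A : E →L[ℝ] E} {N γ C : ℝ} {f : ℝ → E}

lemma aesm_exp_apply (hf : StronglyMeasurable f) (t : ℝ) {μ : Measure ℝ} :
    AEStronglyMeasurable (fun s => NormedSpace.exp ((t - s) • A) (f s)) μ := by
  let +nondep : NormedAlgebra ℚ (E →L[ℝ] E) := .restrictScalars ℚ ℝ (E →L[ℝ] E)
  have hc : Continuous fun s : ℝ => NormedSpace.exp ((t - s) • A) :=
    NormedSpace.exp_continuous.comp ((continuous_const.sub continuous_id).smul continuous_const)
  exact (isBoundedBilinearMap_apply.continuous.comp_stronglyMeasurable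
    (hc.stronglyMeasurable.prodMk hf)).aestronglyMeasurable

lemma exp_smul_add_apply (A : E →L[ℝ] E) (a b : ℝ) (v : E) :
    NormedSpace.exp ((a + b) • A) v
      = NormedSpace.exp (a • A) (NormedSpace.exp (b • A) v) := by
  let +nondep : NormedAlgebra ℚ (E →L[ℝ] E) := .restrictScalars ℚ ℝ (E →L[ℝ] E)
  have hcomm : Commute (a • A) (b • A) := ((Commute.refl A).smul_left a).smul_right b
  rw [add_smul, NormedSpace.exp_add_of_commute hcomm]
  rfl

lemma norm_exp_apply_le (hN : 0 ≤ N) (hC : 0 ≤ C)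
    (hA : ∀ u : ℝ, u ≤ 0 → ‖NormedSpace.exp (u • A)‖ ≤ N * Real.exp (γ * u))
    (hfC : ∀ s, ‖f s‖ ≤ C) {t s : ℝ} (hs : s ∈ Ici t) :
    ‖NormedSpace.exp ((t - s) • A) (f s)‖ ≤ N * C * Real.exp (γ * (t - s)) := by
  have hts : t - s ≤ 0 := sub_nonpos.2 hs
  calc ‖NormedSpace.exp ((t - s) • A) (f s)‖
      ≤ ‖NormedSpace.exp ((t - s) • A)‖ * ‖f s‖ := ContinuousLinearMap.le_opNorm _ _
    _ ≤ (N * Real.exp (γ * (t - s))) * C :=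
        mul_le_mul (hA _ hts) (hfC s) (norm_nonneg _) (by positivity)
    _ = N * C * Real.exp (γ * (t - s)) := by ring

lemma integrableOn_exp_apply_Ici (hγ : 0 < γ) (hN : 0 ≤ N)
    (hA : ∀ u : ℝ, u ≤ 0 → ‖NormedSpace.exp (u • A)‖ ≤ N * Real.exp (γ * u))
    (hf : StronglyMeasurable f) (hC : ∀ s, ‖f s‖ ≤ C) (t : ℝ) :
    IntegrableOn (fun s => NormedSpace.exp ((t - s) • A) (f s)) (Ici t) := by
  have hC0 : 0 ≤ C := le_trans (norm_nonneg (f 0)) (hC 0)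
  have hg : IntegrableOn (fun s => N * C * Real.exp (γ * (t - s))) (Ici t) :=
    (integrableOn_exp_shift hγ t).const_mul _
  refine hg.mono' (aesm_exp_apply hf t) ?_
  exact (ae_restrict_iff' measurableSet_Ici).2
    (ae_of_all _ fun s hs => norm_exp_apply_le hN hC0 hA hC hs)

lemma norm_integral_exp_apply_Ici (hγ : 0 < γ) (hN : 0 ≤ N)
    (hA : ∀ u : ℝ, u ≤ 0 → ‖NormedSpace.exp (u • A)‖ ≤ N * Real.exp (γ * u))
    (hf : StronglyMeasurable f) (hC : ∀ s, ‖f s‖ ≤ C) (t : ℝ) :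
    ‖∫ s in Ici t, NormedSpace.exp ((t - s) • A) (f s)‖ ≤ N * C / γ := by
  have hC0 : 0 ≤ C := le_trans (norm_nonneg (f 0)) (hC 0)
  have hg : IntegrableOn (fun s => N * C * Real.exp (γ * (t - s))) (Ici t) :=
    (integrableOn_exp_shift hγ t).const_mul _
  have hb : ∀ᵐ s ∂(volume.restrict (Ici t)),
      ‖NormedSpace.exp ((t - s) • A) (f s)‖ ≤ N * C * Real.exp (γ * (t - s)) :=
    (ae_restrict_iff' measurableSet_Ici).2
      (ae_of_all _ fun s hs => norm_exp_apply_le hN hC0 hA hC hs)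
  calc ‖∫ s in Ici t, NormedSpace.exp ((t - s) • A) (f s)‖
      ≤ ∫ s in Ici t, N * C * Real.exp (γ * (t - s)) := norm_integral_le_of_norm_le hg hb
    _ = N * C * (1 / γ) := by rw [integral_const_mul, integral_exp_shift hγ t]
    _ = N * C / γ := by ring

lemma continuous_integral_exp_apply_Ici (hγ : 0 < γ) (hN : 0 ≤ N)
    (hA : ∀ u : ℝ, u ≤ 0 → ‖NormedSpace.exp (u • A)‖ ≤ N * Real.exp (γ * u))
    (hf : StronglyMeasurable f) (hC : ∀ s, ‖f s‖ ≤ C) :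
    Continuous fun t => ∫ s in Ici t, NormedSpace.exp ((t - s) • A) (f s) := by
  let +nondep : NormedAlgebra ℚ (E →L[ℝ] E) := .restrictScalars ℚ ℝ (E →L[ℝ] E)
  set q : ℝ → E := fun s => NormedSpace.exp ((-s) • A) (f s) with hq
  have hqint : ∀ t : ℝ, IntegrableOn q (Ici t) := by
    intro t
    have h1 := integrableOn_exp_apply_Ici hγ hN hA hf hC t
    have h2 : IntegrableOn
        (fun s => NormedSpace.exp ((-t) • A) (NormedSpace.exp ((t - s) • A) (f s)))
        (Ici t) := ((NormedSpace.exp ((-t) • A) : E →L[ℝ] E)).integrable_comp h1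
    refine h2.congr_fun (fun s _ => ?_) measurableSet_Ici
    calc NormedSpace.exp ((-t) • A) (NormedSpace.exp ((t - s) • A) (f s))
        = NormedSpace.exp (((-t) + (t - s)) • A) (f s) := (exp_smul_add_apply A _ _ _).symm
      _ = q s := by rw [show (-t) + (t - s) = -s by ring]
  have h2 : ∀ t : ℝ, (∫ s in Ici t, NormedSpace.exp ((t - s) • A) (f s))
      = NormedSpace.exp (t • A) (∫ s in Ici t, q s) := by
    intro t
    rw [← ContinuousLinearMap.integral_comp_comm _ (hqint t)]
    refine setIntegral_congr_fun measurableSet_Ici fun s _ => ?_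
    calc NormedSpace.exp ((t - s) • A) (f s)
        = NormedSpace.exp ((t + (-s)) • A) (f s) := by rw [show t - s = t + (-s) by ring]
      _ = NormedSpace.exp (t • A) (q s) := exp_smul_add_apply A _ _ _
  simp only [h2]
  have hc1 : Continuous fun t : ℝ => NormedSpace.exp (t • A) :=
    NormedSpace.exp_continuous.comp (continuous_id.smul continuous_const)
  exact isBoundedBilinearMap_apply.continuous.comp
    (hc1.prodMk (continuous_integral_Ici hqint))

end core

section mirror
variable {E : Type*} [NormedAddCommGroup E] [NormedSpace ℝ E] [CompleteSpace E]
variable {A : E →L[ℝ] E} {N γ C : ℝ} {f : ℝ → E}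

lemma neg_hA (hA : ∀ u : ℝ, 0 ≤ u → ‖NormedSpace.exp (u • A)‖ ≤ N * Real.exp (-γ * u)) :
    ∀ u : ℝ, u ≤ 0 → ‖NormedSpace.exp (u • (-A))‖ ≤ N * Real.exp (γ * u) := by
  intro u hu
  have h : u • (-A) = (-u) • A := by rw [smul_neg, ← neg_smul]
  rw [h]
  have h2 := hA (-u) (by linarith)
  simpa [show -γ * -u = γ * u by ring] using h2

lemma iic_eq (A : E →L[ℝ] E) (f : ℝ → E) (t : ℝ) :
    (∫ s in Iic t, NormedSpace.exp ((t - s) • A) (f s))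
      = ∫ s in Ici (-t), NormedSpace.exp (((-t) - s) • (-A)) (f (-s)) := by
  have h := integral_comp_neg_Ioi (-t) (fun s => NormedSpace.exp ((t - s) • A) (f s))
  rw [neg_neg] at h
  rw [← h, integral_Ici_eq_integral_Ioi]
  refine setIntegral_congr_fun measurableSet_Ioi fun s _ => ?_
  have harg : ((-t) - s) • (-A) = (t - -s) • A := by
    rw [smul_neg, ← neg_smul]
    congr 1
    ring
  rw [harg]

lemma integrableOn_exp_apply_Iic (hγ : 0 < γ) (hN : 0 ≤ N)
    (hA : ∀ u : ℝ, 0 ≤ u → ‖NormedSpace.exp (u • A)‖ ≤ N * Real.exp (-γ * u))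
    (hf : StronglyMeasurable f) (hC : ∀ s, ‖f s‖ ≤ C) (t : ℝ) :
    IntegrableOn (fun s => NormedSpace.exp ((t - s) • A) (f s)) (Iic t) := by
  have hg : StronglyMeasurable fun s => f (-s) := hf.comp_measurable measurable_neg
  have h1 := integrableOn_exp_apply_Ici (A := -A) hγ hN (neg_hA hA) hg
    (fun s => hC (-s)) (-t)
  have h2 := integrableOn_comp_neg (c := t) h1
  refine h2.congr_fun (fun s _ => ?_) measurableSet_Iic
  have harg : ((-t) - (-s)) • (-A) = (t - s) • A := by
    rw [smul_neg, ← neg_smul]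
    congr 1
    ring
  simp only [neg_neg, harg]

lemma norm_integral_exp_apply_Iic (hγ : 0 < γ) (hN : 0 ≤ N)
    (hA : ∀ u : ℝ, 0 ≤ u → ‖NormedSpace.exp (u • A)‖ ≤ N * Real.exp (-γ * u))
    (hf : StronglyMeasurable f) (hC : ∀ s, ‖f s‖ ≤ C) (t : ℝ) :
    ‖∫ s in Iic t, NormedSpace.exp ((t - s) • A) (f s)‖ ≤ N * C / γ := by
  rw [iic_eq]
  exact norm_integral_exp_apply_Ici (A := -A) hγ hN (neg_hA hA)
    (hf.comp_measurable measurable_neg) (fun s => hC (-s)) (-t)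

lemma continuous_integral_exp_apply_Iic (hγ : 0 < γ) (hN : 0 ≤ N)
    (hA : ∀ u : ℝ, 0 ≤ u → ‖NormedSpace.exp (u • A)‖ ≤ N * Real.exp (-γ * u))
    (hf : StronglyMeasurable f) (hC : ∀ s, ‖f s‖ ≤ C) :
    Continuous fun t => ∫ s in Iic t, NormedSpace.exp ((t - s) • A) (f s) := by
  have heq : (fun t => ∫ s in Iic t, NormedSpace.exp ((t - s) • A) (f s))
      = (fun τ => ∫ s in Ici τ, NormedSpace.exp ((τ - s) • (-A)) (f (-s))) ∘ (fun t => -t) :=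
    funext fun t => iic_eq A f t
  rw [heq]
  exact (continuous_integral_exp_apply_Ici (A := -A) hγ hN (neg_hA hA)
    (hf.comp_measurable measurable_neg) (fun s => hC (-s))).comp continuous_neg

end mirror

end HypAux

open HypAux in
/-- Existence and uniqueness of a bounded solution of the hyperbolic integral equations. -/
theorem stmt1 (r q : ℕ)
    (Ap : Matrix (Fin r) (Fin r) ℝ) (Am : Matrix (Fin q) (Fin q) ℝ)
    (hAp : ∀ μ ∈ ((Ap.map (algebraMap ℝ ℂ)).charpoly).roots, 0 < μ.re)
    (hAm : ∀ μ ∈ ((Am.map (algebraMap ℝ ℂ)).charpoly).roots, μ.re < 0)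
    (N γ M L : ℝ) (hN : 1 ≤ N) (hγ : 0 < γ) (hM : 0 < M) (hL : 0 < L)
    (hexpP : ∀ t : ℝ, t ≤ 0 →
      ‖NormedSpace.exp (t • (Matrix.toEuclideanCLM (𝕜 := ℝ) Ap))‖ ≤ N * Real.exp (γ * t))
    (hexpM : ∀ t : ℝ, 0 ≤ t →
      ‖NormedSpace.exp (t • (Matrix.toEuclideanCLM (𝕜 := ℝ) Am))‖ ≤ N * Real.exp (-γ * t))
    (Fp : ℝ → EuclideanSpace ℝ (Fin r) × EuclideanSpace ℝ (Fin q) → EuclideanSpace ℝ (Fin r))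
    (Fm : ℝ → EuclideanSpace ℝ (Fin r) × EuclideanSpace ℝ (Fin q) → EuclideanSpace ℝ (Fin q))
    (hFbound : ∀ t x, Real.sqrt (‖Fp t x‖ ^ 2 + ‖Fm t x‖ ^ 2) ≤ M)
    (hFlip : ∀ t x y, Real.sqrt (‖Fp t x - Fp t y‖ ^ 2 + ‖Fm t x - Fm t y‖ ^ 2)
        ≤ L * Real.sqrt (‖x.1 - y.1‖ ^ 2 + ‖x.2 - y.2‖ ^ 2))
    (hFmeas : ∀ x, Measurable (fun t => Fp t x) ∧ Measurable (fun t => Fm t x))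
    (hcontract : Real.sqrt 2 * N * L < γ) :
    ∃ φp : ℝ → EuclideanSpace ℝ (Fin r), ∃ φm : ℝ → EuclideanSpace ℝ (Fin q),
      (Continuous φp ∧ Continuous φm ∧
        (∀ t, Real.sqrt (‖φp t‖ ^ 2 + ‖φm t‖ ^ 2) ≤ Real.sqrt 2 * N * M / γ) ∧
        (∀ t, φp t = - ∫ s in Set.Ici t,
          NormedSpace.exp ((t - s) • (Matrix.toEuclideanCLM (𝕜 := ℝ) Ap)) (Fp s (φp s, φm s))) ∧
        (∀ t, φm t = ∫ s in Set.Iic t,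
          NormedSpace.exp ((t - s) • (Matrix.toEuclideanCLM (𝕜 := ℝ) Am)) (Fm s (φp s, φm s)))) ∧
      (∀ ψp : ℝ → EuclideanSpace ℝ (Fin r), ∀ ψm : ℝ → EuclideanSpace ℝ (Fin q),
        Continuous ψp → Continuous ψm →
        (∃ C, ∀ t, Real.sqrt (‖ψp t‖ ^ 2 + ‖ψm t‖ ^ 2) ≤ C) →
        (∀ t, ψp t = - ∫ s in Set.Ici t,
          NormedSpace.exp ((t - s) • (Matrix.toEuclideanCLM (𝕜 := ℝ) Ap)) (Fp s (ψp s, ψm s))) →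
        (∀ t, ψm t = ∫ s in Set.Iic t,
          NormedSpace.exp ((t - s) • (Matrix.toEuclideanCLM (𝕜 := ℝ) Am)) (Fm s (ψp s, ψm s))) →
        ψp = φp ∧ ψm = φm) := by
  classical
  set AP : EuclideanSpace ℝ (Fin r) →L[ℝ] EuclideanSpace ℝ (Fin r) :=
    Matrix.toEuclideanCLM (𝕜 := ℝ) Ap with hAPdef
  set AM : EuclideanSpace ℝ (Fin q) →L[ℝ] EuclideanSpace ℝ (Fin q) :=
    Matrix.toEuclideanCLM (𝕜 := ℝ) Am with hAMdef
  have hN0 : (0:ℝ) ≤ N := by linarith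
  have hMp : ∀ t x, ‖Fp t x‖ ≤ M := fun t x =>
    le_trans (left_le_sqrt (norm_nonneg _)) (hFbound t x)
  have hMm : ∀ t x, ‖Fm t x‖ ≤ M := fun t x =>
    le_trans (right_le_sqrt (norm_nonneg _)) (hFbound t x)
  have hlip2 : ∀ (t : ℝ) (x y : EuclideanSpace ℝ (Fin r) × EuclideanSpace ℝ (Fin q)),
      Real.sqrt (‖Fp t x - Fp t y‖ ^ 2 + ‖Fm t x - Fm t y‖ ^ 2)
        ≤ Real.sqrt 2 * L * ‖x - y‖ := by
    intro t x y
    refine le_trans (hFlip t x y) ?_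
    have h1 : Real.sqrt (‖x.1 - y.1‖ ^ 2 + ‖x.2 - y.2‖ ^ 2)
        ≤ Real.sqrt 2 * max ‖x.1 - y.1‖ ‖x.2 - y.2‖ :=
      sqrt_le_sqrt2_mul_max (norm_nonneg _) (norm_nonneg _)
    have h2 : max ‖x.1 - y.1‖ ‖x.2 - y.2‖ = ‖x - y‖ := by
      rw [Prod.norm_def]
      rfl
    rw [h2] at h1
    calc L * Real.sqrt (‖x.1 - y.1‖ ^ 2 + ‖x.2 - y.2‖ ^ 2)
        ≤ L * (Real.sqrt 2 * ‖x - y‖) := mul_le_mul_of_nonneg_left h1 hL.le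
      _ = Real.sqrt 2 * L * ‖x - y‖ := by ring
  have hLp : ∀ (t : ℝ) (x y : EuclideanSpace ℝ (Fin r) × EuclideanSpace ℝ (Fin q)),
      ‖Fp t x - Fp t y‖ ≤ Real.sqrt 2 * L * ‖x - y‖ :=
    fun t x y => le_trans (left_le_sqrt (norm_nonneg _)) (hlip2 t x y)
  have hLm : ∀ (t : ℝ) (x y : EuclideanSpace ℝ (Fin r) × EuclideanSpace ℝ (Fin q)),
      ‖Fm t x - Fm t y‖ ≤ Real.sqrt 2 * L * ‖x - y‖ :=
    fun t x y => le_trans (right_le_sqrt (norm_nonneg _)) (hlip2 t x y)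
  have hcontFp : ∀ t : ℝ, Continuous fun x => Fp t x := by
    intro t
    refine (LipschitzWith.of_dist_le_mul (K := Real.toNNReal (Real.sqrt 2 * L))
      (f := fun x => Fp t x) ?_).continuous
    intro x y
    rw [dist_eq_norm, dist_eq_norm, Real.coe_toNNReal _ (by positivity)]
    exact hLp t x y
  have hcontFm : ∀ t : ℝ, Continuous fun x => Fm t x := by
    intro t
    refine (LipschitzWith.of_dist_le_mul (K := Real.toNNReal (Real.sqrt 2 * L))
      (f := fun x => Fm t x) ?_).continuous
    intro x y
    rw [dist_eq_norm, dist_eq_norm, Real.coe_toNNReal _ (by positivity)]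
    exact hLm t x y
  have hjmp : Measurable (Function.uncurry fun x (t : ℝ) => Fp t x) :=
    measurable_uncurry_of_continuous_of_measurable hcontFp (fun x => (hFmeas x).1)
  have hjmm : Measurable (Function.uncurry fun x (t : ℝ) => Fm t x) :=
    measurable_uncurry_of_continuous_of_measurable hcontFm (fun x => (hFmeas x).2)
  have hsmp : ∀ Φ : ℝ → EuclideanSpace ℝ (Fin r) × EuclideanSpace ℝ (Fin q),
      Measurable Φ → StronglyMeasurable fun s => Fp s (Φ s) :=
    fun Φ hΦ => (hjmp.comp (hΦ.prodMk measurable_id)).stronglyMeasurable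
  have hsmm : ∀ Φ : ℝ → EuclideanSpace ℝ (Fin r) × EuclideanSpace ℝ (Fin q),
      Measurable Φ → StronglyMeasurable fun s => Fm s (Φ s) :=
    fun Φ hΦ => (hjmm.comp (hΦ.prodMk measurable_id)).stronglyMeasurable
  -- the operator T on bounded continuous functions
  set X := BoundedContinuousFunction ℝ (EuclideanSpace ℝ (Fin r) × EuclideanSpace ℝ (Fin q))
    with hX
  have hsmpφ : ∀ φ : X, StronglyMeasurable fun s => Fp s (φ s) :=
    fun φ => hsmp _ φ.continuous.measurable
  have hsmmφ : ∀ φ : X, StronglyMeasurable fun s => Fm s (φ s) :=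
    fun φ => hsmm _ φ.continuous.measurable
  set Tp : X → ℝ → EuclideanSpace ℝ (Fin r) := fun φ t =>
    - ∫ s in Set.Ici t, NormedSpace.exp ((t - s) • AP) (Fp s (φ s)) with hTpdef
  set Tm : X → ℝ → EuclideanSpace ℝ (Fin q) := fun φ t =>
    ∫ s in Set.Iic t, NormedSpace.exp ((t - s) • AM) (Fm s (φ s)) with hTmdef
  have hTpcont : ∀ φ : X, Continuous (Tp φ) := fun φ =>
    (continuous_integral_exp_apply_Ici hγ hN0 hexpP (hsmpφ φ) (fun s => hMp s (φ s))).neg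
  have hTmcont : ∀ φ : X, Continuous (Tm φ) := fun φ =>
    continuous_integral_exp_apply_Iic hγ hN0 hexpM (hsmmφ φ) (fun s => hMm s (φ s))
  have hTpbound : ∀ (φ : X) (t : ℝ), ‖Tp φ t‖ ≤ N * M / γ := by
    intro φ t
    rw [hTpdef]
    simp only [norm_neg]
    exact norm_integral_exp_apply_Ici hγ hN0 hexpP (hsmpφ φ) (fun s => hMp s (φ s)) t
  have hTmbound : ∀ (φ : X) (t : ℝ), ‖Tm φ t‖ ≤ N * M / γ := fun φ t =>
    norm_integral_exp_apply_Iic hγ hN0 hexpM (hsmmφ φ) (fun s => hMm s (φ s)) t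
  set T : X → X := fun φ =>
    BoundedContinuousFunction.ofNormedAddCommGroup (fun t => (Tp φ t, Tm φ t))
      ((hTpcont φ).prodMk (hTmcont φ)) (N * M / γ)
      (fun t => by
        rw [Prod.norm_def]
        exact max_le (hTpbound φ t) (hTmbound φ t)) with hTdef
  have hTapp : ∀ (φ : X) (t : ℝ), T φ t = (Tp φ t, Tm φ t) := fun φ t => rfl
  -- contraction estimate
  set k : ℝ := Real.sqrt 2 * N * L / γ with hkdef
  have hk0 : 0 ≤ k := by positivity
  have hk1 : k < 1 := (div_lt_one hγ).2 hcontract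
  have hTdist : ∀ φ ψ : X, dist (T φ) (T ψ) ≤ k * dist φ ψ := by
    intro φ ψ
    have hD0 : 0 ≤ dist φ ψ := dist_nonneg
    have hcoe : ∀ s : ℝ, ‖φ s - ψ s‖ ≤ dist φ ψ := fun s => by
      rw [← dist_eq_norm]
      exact BoundedContinuousFunction.dist_coe_le_dist s
    have hΔp : ∀ s : ℝ, ‖Fp s (φ s) - Fp s (ψ s)‖ ≤ Real.sqrt 2 * L * dist φ ψ := fun s =>
      le_trans (hLp s (φ s) (ψ s))
        (mul_le_mul_of_nonneg_left (hcoe s) (by positivity))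
    have hΔm : ∀ s : ℝ, ‖Fm s (φ s) - Fm s (ψ s)‖ ≤ Real.sqrt 2 * L * dist φ ψ := fun s =>
      le_trans (hLm s (φ s) (ψ s))
        (mul_le_mul_of_nonneg_left (hcoe s) (by positivity))
    refine (BoundedContinuousFunction.dist_le (by positivity)).2 fun t => ?_
    rw [hTapp, hTapp, Prod.dist_eq]
    refine max_le ?_ ?_
    · show dist (Tp φ t) (Tp ψ t) ≤ k * dist φ ψ
      rw [dist_eq_norm]
      have hint1 := integrableOn_exp_apply_Ici hγ hN0 hexpP (hsmpφ φ)
        (fun s => hMp s (φ s)) t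
      have hint2 := integrableOn_exp_apply_Ici hγ hN0 hexpP (hsmpφ ψ)
        (fun s => hMp s (ψ s)) t
      have hintsub : (∫ s in Set.Ici t, NormedSpace.exp ((t - s) • AP) (Fp s (φ s)))
            - (∫ s in Set.Ici t, NormedSpace.exp ((t - s) • AP) (Fp s (ψ s)))
          = ∫ s in Set.Ici t, NormedSpace.exp ((t - s) • AP)
              (Fp s (φ s) - Fp s (ψ s)) := by
        rw [← integral_sub hint1 hint2]
        exact setIntegral_congr_fun measurableSet_Ici fun s _ => (map_sub _ _ _).symm
      have hdiff : Tp φ t - Tp ψ t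
          = -∫ s in Set.Ici t, NormedSpace.exp ((t - s) • AP)
              (Fp s (φ s) - Fp s (ψ s)) := by
        rw [← hintsub, hTpdef]
        rw [neg_sub_neg, neg_sub]
      rw [hdiff, norm_neg]
      refine le_trans (norm_integral_exp_apply_Ici (C := Real.sqrt 2 * L * dist φ ψ)
        hγ hN0 hexpP ((hsmpφ φ).sub (hsmpφ ψ)) hΔp t) (le_of_eq ?_)
      rw [hkdef]
      ring
    · show dist (Tm φ t) (Tm ψ t) ≤ k * dist φ ψ
      rw [dist_eq_norm]
      have hint1 := integrableOn_exp_apply_Iic hγ hN0 hexpM (hsmmφ φ)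
        (fun s => hMm s (φ s)) t
      have hint2 := integrableOn_exp_apply_Iic hγ hN0 hexpM (hsmmφ ψ)
        (fun s => hMm s (ψ s)) t
      have hintsub : (∫ s in Set.Iic t, NormedSpace.exp ((t - s) • AM) (Fm s (φ s)))
            - (∫ s in Set.Iic t, NormedSpace.exp ((t - s) • AM) (Fm s (ψ s)))
          = ∫ s in Set.Iic t, NormedSpace.exp ((t - s) • AM)
              (Fm s (φ s) - Fm s (ψ s)) := by
        rw [← integral_sub hint1 hint2]
        exact setIntegral_congr_fun measurableSet_Iic fun s _ => (map_sub _ _ _).symm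
      have hdiff : Tm φ t - Tm ψ t
          = ∫ s in Set.Iic t, NormedSpace.exp ((t - s) • AM)
              (Fm s (φ s) - Fm s (ψ s)) := by
        rw [← hintsub, hTmdef]
      rw [hdiff]
      refine le_trans (norm_integral_exp_apply_Iic (C := Real.sqrt 2 * L * dist φ ψ)
        hγ hN0 hexpM ((hsmmφ φ).sub (hsmmφ ψ)) hΔm t) (le_of_eq ?_)
      rw [hkdef]
      ring
  have hT : ContractingWith (Real.toNNReal k) T := by
    constructor
    · have h1 : (Real.toNNReal k : ℝ) < 1 := by
        rw [Real.coe_toNNReal _ hk0]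
        exact hk1
      exact_mod_cast h1
    · refine LipschitzWith.of_dist_le_mul fun φ ψ => ?_
      rw [Real.coe_toNNReal _ hk0]
      exact hTdist φ ψ
  haveI : Nonempty X := ⟨0⟩
  set φstar : X := ContractingWith.fixedPoint T hT with hφdef
  have hfix : T φstar = φstar := hT.fixedPoint_isFixedPt
  have hfst : ∀ t : ℝ, Tp φstar t = (φstar t).1 := fun t =>
    congrArg (fun f : X => (f t).1) hfix
  have hsnd : ∀ t : ℝ, Tm φstar t = (φstar t).2 := fun t =>
    congrArg (fun f : X => (f t).2) hfix
  refine ⟨fun t => (φstar t).1, fun t => (φstar t).2, ⟨?_, ?_, ?_, ?_, ?_⟩, ?_⟩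
  · exact continuous_fst.comp φstar.continuous
  · exact continuous_snd.comp φstar.continuous
  · intro t
    have h1 : ‖(φstar t).1‖ ≤ N * M / γ := by
      rw [← hfst t]
      exact hTpbound φstar t
    have h2 : ‖(φstar t).2‖ ≤ N * M / γ := by
      rw [← hsnd t]
      exact hTmbound φstar t
    calc Real.sqrt (‖(φstar t).1‖ ^ 2 + ‖(φstar t).2‖ ^ 2)
        ≤ Real.sqrt 2 * max ‖(φstar t).1‖ ‖(φstar t).2‖ :=
          sqrt_le_sqrt2_mul_max (norm_nonneg _) (norm_nonneg _)
      _ ≤ Real.sqrt 2 * (N * M / γ) :=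
          mul_le_mul_of_nonneg_left (max_le h1 h2) (Real.sqrt_nonneg 2)
      _ = Real.sqrt 2 * N * M / γ := by ring
  · intro t
    beta_reduce
    rw [← hfst t, hTpdef]
  · intro t
    beta_reduce
    rw [← hsnd t, hTmdef]
  · rintro ψp ψm hcψp hcψm ⟨C, hC⟩ heqp heqm
    have hbdd : ∀ t : ℝ, ‖((ψp t, ψm t) :
        EuclideanSpace ℝ (Fin r) × EuclideanSpace ℝ (Fin q))‖ ≤ C := by
      intro t
      rw [Prod.norm_def]
      exact max_le (le_trans (left_le_sqrt (norm_nonneg _)) (hC t))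
        (le_trans (right_le_sqrt (norm_nonneg _)) (hC t))
    set Ψ : X := BoundedContinuousFunction.ofNormedAddCommGroup (fun t => (ψp t, ψm t))
      (hcψp.prodMk hcψm) C hbdd with hΨdef
    have hΨfix : Function.IsFixedPt T Ψ := by
      refine BoundedContinuousFunction.ext fun t => ?_
      show (Tp Ψ t, Tm Ψ t) = Ψ t
      have h1 : Tp Ψ t = ψp t := (heqp t).symm
      have h2 : Tm Ψ t = ψm t := (heqm t).symm
      rw [h1, h2]
      rfl
    have hΨeq : Ψ = φstar := hT.fixedPoint_unique hΨfix
    constructor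
    · funext t
      exact congrArg Prod.fst (congrArg (fun f : X => f t) hΨeq)
    · funext t
      exact congrArg Prod.snd (congrArg (fun f : X => f t) hΨeq)
end

section
/- Let S be the set of continuous functions φ : ℝ → ℝ^p with sup-norm at most K := √2·N·M/γ. Define the operator Ω by (Ωφ)₊(t) = -∫_t^∞ e^{A₊(t-s)} F₊(s, φ(s)) ds and (Ωφ)₋(t) = ∫_{-∞}^t e^{A₋(t-s)} F₋(s, φ(s)) ds, where ‖F(s,x)‖ ≤ M for all s, x. Then Ω maps S into S. -/
open MeasureTheory Filter Set

lemma expSmulCont {E : Type*} [NormedAddCommGroup E] [NormedSpace ℝ E] [CompleteSpace E]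
    (A : E →L[ℝ] E) : Continuous fun t : ℝ => NormedSpace.exp (t • A) :=
  by
  let +nondep : NormedAlgebra ℚ (E →L[ℝ] E) := .restrictScalars ℚ ℝ (E →L[ℝ] E)
  exact NormedSpace.exp_continuous.comp (continuous_id.smul continuous_const)

lemma expdecay_integrableOn (γ t : ℝ) (hγ : 0 < γ) :
    IntegrableOn (fun s => Real.exp (γ * (t - s))) (Set.Ioi t) := by
  have h := (exp_neg_integrableOn_Ioi t hγ).const_mul (Real.exp (γ * t))
  refine IntegrableOn.congr_fun h (fun s _ => ?_) measurableSet_Ioi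
  rw [← Real.exp_add]; ring_nf

lemma expdecay_integral (γ t : ℝ) (hγ : 0 < γ) :
    ∫ s in Set.Ioi t, Real.exp (γ * (t - s)) = 1 / γ := by
  have hderiv : ∀ x ∈ Set.Ici t,
      HasDerivAt (fun s => -(1 / γ) * Real.exp (γ * (t - s))) (Real.exp (γ * (t - x))) x := by
    intro x _
    have h1 : HasDerivAt (fun s : ℝ => γ * (t - s)) (-γ) x := by
      simpa using ((hasDerivAt_id x).const_sub t).const_mul γ
    have h2 := (h1.exp.const_mul (-(1 / γ)))
    refine h2.congr_deriv ?_
    have hγ0 : γ ≠ 0 := hγ.ne'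
    field_simp
  have htend : Tendsto (fun s => -(1 / γ) * Real.exp (γ * (t - s))) atTop (nhds 0) := by
    have : Tendsto (fun s : ℝ => γ * (t - s)) atTop atBot := by
      apply Tendsto.const_mul_atBot hγ
      exact tendsto_atBot_add_const_left _ _ tendsto_neg_atTop_atBot
    simpa using (Real.tendsto_exp_atBot.comp this).const_mul (-(1 / γ))
  have := integral_Ioi_of_hasDerivAt_of_tendsto' hderiv (expdecay_integrableOn γ t hγ) htend
  rw [this]; simp

set_option synthInstance.maxHeartbeats 1000000 in
lemma auxP {E : Type*} [NormedAddCommGroup E] [NormedSpace ℝ E] [CompleteSpace E]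
    (A : E →L[ℝ] E) (N γ M : ℝ) (hγ : 0 < γ)
    (hexp : ∀ τ : ℝ, τ ≤ 0 → ‖NormedSpace.exp (τ • A)‖ ≤ N * Real.exp (γ * τ))
    (f : ℝ → E) (hf : Continuous f) (hfb : ∀ s, ‖f s‖ ≤ M) :
    Continuous (fun t => ∫ s in Set.Ici t, NormedSpace.exp ((t - s) • A) (f s)) ∧
      ∀ t, ‖∫ s in Set.Ici t, NormedSpace.exp ((t - s) • A) (f s)‖ ≤ N * M / γ := by
  have hM : 0 ≤ M := le_trans (norm_nonneg (f 0)) (hfb 0)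
  have hNM : 0 ≤ N * M := by
    rcases eq_or_lt_of_le hM with h | h
    · simp [← h]
    · have hN : 0 ≤ N := by
        have := le_trans (norm_nonneg _) (hexp (-1) (by norm_num))
        nlinarith [Real.exp_pos (γ * (-1))]
      positivity
  -- continuity of the integrand in s (for fixed t)
  have hcont : ∀ t : ℝ, Continuous fun s => NormedSpace.exp ((t - s) • A) (f s) := fun t =>
    (((expSmulCont A).comp (continuous_const.sub continuous_id)).clm_apply hf)
  -- bound on the integrand
  have hbnd : ∀ t s : ℝ, t ≤ s →
      ‖NormedSpace.exp ((t - s) • A) (f s)‖ ≤ N * M * Real.exp (γ * (t - s)) := by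
    intro t s hts
    calc ‖NormedSpace.exp ((t - s) • A) (f s)‖
        ≤ ‖NormedSpace.exp ((t - s) • A)‖ * ‖f s‖ := ContinuousLinearMap.le_opNorm _ _
      _ ≤ (N * Real.exp (γ * (t - s))) * M := by
          exact mul_le_mul (hexp _ (by linarith)) (hfb s) (norm_nonneg _)
            (le_trans (norm_nonneg _) (hexp _ (by linarith)))
      _ = N * M * Real.exp (γ * (t - s)) := by ring
  -- integrability on Ioi t
  have hint : ∀ t : ℝ, IntegrableOn (fun s => NormedSpace.exp ((t - s) • A) (f s)) (Set.Ioi t) := by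
    intro t
    refine Integrable.mono' ((expdecay_integrableOn γ t hγ).const_mul (N * M))
      (hcont t).aestronglyMeasurable ?_
    refine (ae_restrict_iff' measurableSet_Ioi).2 (ae_of_all _ fun s hs => ?_)
    exact hbnd t s (le_of_lt hs)
  -- the norm bound
  have hb : ∀ t, ‖∫ s in Set.Ici t, NormedSpace.exp ((t - s) • A) (f s)‖ ≤ N * M / γ := by
    intro t
    rw [integral_Ici_eq_integral_Ioi]
    calc ‖∫ s in Set.Ioi t, NormedSpace.exp ((t - s) • A) (f s)‖
        ≤ ∫ s in Set.Ioi t, N * M * Real.exp (γ * (t - s)) := by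
          refine norm_integral_le_of_norm_le ((expdecay_integrableOn γ t hγ).const_mul (N * M)) ?_
          exact (ae_restrict_iff' measurableSet_Ioi).2 (ae_of_all _ fun s hs => hbnd t s hs.le)
      _ = N * M * (1 / γ) := by
          rw [MeasureTheory.integral_const_mul, expdecay_integral γ t hγ]
      _ = N * M / γ := by ring
  refine ⟨?_, hb⟩
  -- continuity
  set g : ℝ → E := fun s => NormedSpace.exp ((-s) • A) (f s) with hg_def
  have hgc : Continuous g := ((expSmulCont A).comp continuous_neg).clm_apply hf
  have hcomm : ∀ a b : ℝ, NormedSpace.exp ((a + b) • A)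
      = NormedSpace.exp (a • A) * NormedSpace.exp (b • A) := by
    intro a b
    rw [add_smul]
    let +nondep : NormedAlgebra ℚ (E →L[ℝ] E) := .restrictScalars ℚ ℝ (E →L[ℝ] E)
    exact NormedSpace.exp_add_of_commute (((Commute.refl A).smul_right b).smul_left a)
  have hgint : ∀ t : ℝ, IntegrableOn g (Set.Ioi t) := by
    intro t
    have := (NormedSpace.exp ((-t) • A)).integrable_comp (hint t)
    refine IntegrableOn.congr_fun this (fun s _ => ?_) measurableSet_Ioi
    show NormedSpace.exp ((-t) • A) (NormedSpace.exp ((t - s) • A) (f s))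
      = NormedSpace.exp ((-s) • A) (f s)
    have : ((-s : ℝ)) = (-t) + (t - s) := by ring
    rw [this, hcomm]
    rfl
  have hrw : ∀ t : ℝ, (∫ s in Set.Ici t, NormedSpace.exp ((t - s) • A) (f s))
      = NormedSpace.exp (t • A) (∫ s in Set.Ioi t, g s) := by
    intro t
    rw [integral_Ici_eq_integral_Ioi,
      ← ContinuousLinearMap.integral_comp_comm _ (hgint t)]
    refine setIntegral_congr_fun measurableSet_Ioi fun s _ => ?_
    show NormedSpace.exp ((t - s) • A) (f s) = NormedSpace.exp (t • A) (g s)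
    have : ((t - s : ℝ)) = t + (-s) := by ring
    rw [this, hcomm]
    rfl
  have key : ∀ a b : ℝ, a ≤ b →
      (∫ s in Set.Ioi a, g s) = (∫ s in a..b, g s) + ∫ s in Set.Ioi b, g s := by
    intro a b hab
    rw [intervalIntegral.integral_of_le hab,
      ← setIntegral_union (Set.Ioc_disjoint_Ioi le_rfl) measurableSet_Ioi
        ((hgint a).mono_set Set.Ioc_subset_Ioi_self) (hgint b),
      Set.Ioc_union_Ioi_eq_Ioi hab]
  have hsplit : ∀ t : ℝ, (∫ s in Set.Ioi t, g s)
      = (∫ s in Set.Ioi (0:ℝ), g s) - ∫ s in (0:ℝ)..t, g s := by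
    intro t
    rcases le_total 0 t with h | h
    · rw [key 0 t h]; abel
    · rw [key t 0 h, intervalIntegral.integral_symm]; abel
  have hprim : Continuous fun t => ∫ s in (0:ℝ)..t, g s :=
    intervalIntegral.continuous_primitive (fun a b => hgc.intervalIntegrable a b) 0
  have : (fun t => ∫ s in Set.Ici t, NormedSpace.exp ((t - s) • A) (f s))
      = fun t => NormedSpace.exp (t • A)
        ((∫ s in Set.Ioi (0:ℝ), g s) - ∫ s in (0:ℝ)..t, g s) := by
    funext t; rw [hrw t, hsplit t]
  rw [this]
  exact (expSmulCont A).clm_apply (continuous_const.sub hprim)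

/-- The operator Ω maps the ball S of continuous functions with sup-norm at most
`√2·N·M/γ` into itself. -/
theorem stmt2 (r q : ℕ)
    (Ap : Matrix (Fin r) (Fin r) ℝ) (Am : Matrix (Fin q) (Fin q) ℝ)
    (N γ M : ℝ) (hN : 1 ≤ N) (hγ : 0 < γ) (hM : 0 < M)
    (hexpP : ∀ t : ℝ, t ≤ 0 →
      ‖NormedSpace.exp (t • (Matrix.toEuclideanCLM (𝕜 := ℝ) Ap))‖ ≤ N * Real.exp (γ * t))
    (hexpM : ∀ t : ℝ, 0 ≤ t →
      ‖NormedSpace.exp (t • (Matrix.toEuclideanCLM (𝕜 := ℝ) Am))‖ ≤ N * Real.exp (-γ * t))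
    (Fp : ℝ → EuclideanSpace ℝ (Fin r) × EuclideanSpace ℝ (Fin q) → EuclideanSpace ℝ (Fin r))
    (Fm : ℝ → EuclideanSpace ℝ (Fin r) × EuclideanSpace ℝ (Fin q) → EuclideanSpace ℝ (Fin q))
    (hFc : Continuous (Function.uncurry fun t x => (Fp t x, Fm t x)))
    (hFbound : ∀ t x, Real.sqrt (‖Fp t x‖ ^ 2 + ‖Fm t x‖ ^ 2) ≤ M)
    (φp : ℝ → EuclideanSpace ℝ (Fin r)) (φm : ℝ → EuclideanSpace ℝ (Fin q))
    (hφc : Continuous φp ∧ Continuous φm)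
    (hφS : ∀ t, Real.sqrt (‖φp t‖ ^ 2 + ‖φm t‖ ^ 2) ≤ Real.sqrt 2 * N * M / γ)
    (Ωp : ℝ → EuclideanSpace ℝ (Fin r)) (Ωm : ℝ → EuclideanSpace ℝ (Fin q))
    (hΩp : ∀ t, Ωp t = - ∫ s in Set.Ici t,
      NormedSpace.exp ((t - s) • (Matrix.toEuclideanCLM (𝕜 := ℝ) Ap)) (Fp s (φp s, φm s)))
    (hΩm : ∀ t, Ωm t = ∫ s in Set.Iic t,
      NormedSpace.exp ((t - s) • (Matrix.toEuclideanCLM (𝕜 := ℝ) Am)) (Fm s (φp s, φm s))) :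
    (Continuous Ωp ∧ Continuous Ωm) ∧
      ∀ t, Real.sqrt (‖Ωp t‖ ^ 2 + ‖Ωm t‖ ^ 2) ≤ Real.sqrt 2 * N * M / γ := by
  obtain ⟨hφpc, hφmc⟩ := hφc
  have hN0 : (0:ℝ) ≤ N := le_trans zero_le_one hN
  set Bp := Matrix.toEuclideanCLM (𝕜 := ℝ) Ap with hBp
  set Bm := Matrix.toEuclideanCLM (𝕜 := ℝ) Am with hBm
  -- bounds on components of F
  have hfpb : ∀ s, ‖Fp s (φp s, φm s)‖ ≤ M := by
    intro s
    calc ‖Fp s (φp s, φm s)‖ = Real.sqrt (‖Fp s (φp s, φm s)‖ ^ 2) :=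
          (Real.sqrt_sq (norm_nonneg _)).symm
      _ ≤ Real.sqrt (‖Fp s (φp s, φm s)‖ ^ 2 + ‖Fm s (φp s, φm s)‖ ^ 2) :=
          Real.sqrt_le_sqrt (le_add_of_nonneg_right (sq_nonneg _))
      _ ≤ M := hFbound s _
  have hfmb : ∀ s : ℝ, ‖Fm (-s) (φp (-s), φm (-s))‖ ≤ M := by
    intro s
    calc ‖Fm (-s) (φp (-s), φm (-s))‖ = Real.sqrt (‖Fm (-s) (φp (-s), φm (-s))‖ ^ 2) :=
          (Real.sqrt_sq (norm_nonneg _)).symm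
      _ ≤ Real.sqrt (‖Fp (-s) (φp (-s), φm (-s))‖ ^ 2 + ‖Fm (-s) (φp (-s), φm (-s))‖ ^ 2) :=
          Real.sqrt_le_sqrt (le_add_of_nonneg_left (sq_nonneg _))
      _ ≤ M := hFbound _ _
  -- continuity of composed functions
  have hfpc : Continuous fun s => Fp s (φp s, φm s) :=
    (continuous_fst.comp hFc).comp (continuous_id.prodMk (hφpc.prodMk hφmc))
  have hfmc : Continuous fun s : ℝ => Fm (-s) (φp (-s), φm (-s)) :=
    (continuous_snd.comp hFc).comp (continuous_neg.prodMk
      ((hφpc.comp continuous_neg).prodMk (hφmc.comp continuous_neg)))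
  -- plus side
  have HP := auxP Bp N γ M hγ hexpP (fun s => Fp s (φp s, φm s)) hfpc hfpb
  -- minus side, via reflection
  have hexp' : ∀ τ : ℝ, τ ≤ 0 → ‖NormedSpace.exp (τ • (-Bm))‖ ≤ N * Real.exp (γ * τ) := by
    intro τ hτ
    have h1 : τ • (-Bm) = (-τ) • Bm := by rw [smul_neg, ← neg_smul]
    have h2 := hexpM (-τ) (by linarith)
    rw [h1]
    rw [neg_mul_neg] at h2
    exact h2
  have HM := auxP (-Bm) N γ M hγ hexp'
    (fun s : ℝ => Fm (-s) (φp (-s), φm (-s))) hfmc hfmb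
  have hΩmG : ∀ t, Ωm t = ∫ u in Set.Ici (-t),
      NormedSpace.exp ((-t - u) • (-Bm)) (Fm (-u) (φp (-u), φm (-u))) := by
    intro t
    rw [hΩm t]
    have hsub := integral_comp_neg_Ioi (-t)
      (fun x => NormedSpace.exp ((t - x) • Bm) (Fm x (φp x, φm x)))
    rw [neg_neg] at hsub
    rw [← hsub, integral_Ici_eq_integral_Ioi]
    refine (setIntegral_congr_fun measurableSet_Ioi fun u _ => ?_).symm
    have harg : ((-t - u) • (-Bm)) = ((t - -u) • Bm) := by
      rw [smul_neg, ← neg_smul]; congr 1; ring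
    rw [harg]
  constructor
  · constructor
    · have : Ωp = fun t => - ∫ s in Set.Ici t,
          NormedSpace.exp ((t - s) • Bp) (Fp s (φp s, φm s)) := funext hΩp
      rw [this]
      exact HP.1.neg
    · have : Ωm = fun t => (fun t' => ∫ u in Set.Ici t',
          NormedSpace.exp ((t' - u) • (-Bm)) (Fm (-u) (φp (-u), φm (-u)))) (-t) := by
        funext t
        rw [hΩmG t]
      rw [this]
      exact HM.1.comp continuous_neg
  · intro t
    have ha : ‖Ωp t‖ ≤ N * M / γ := by rw [hΩp t, norm_neg]; exact HP.2 t
    have hb : ‖Ωm t‖ ≤ N * M / γ := by rw [hΩmG t]; exact HM.2 (-t)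
    have hc : (0:ℝ) ≤ N * M / γ := by positivity
    calc Real.sqrt (‖Ωp t‖ ^ 2 + ‖Ωm t‖ ^ 2) ≤ Real.sqrt (2 * (N * M / γ) ^ 2) :=
          Real.sqrt_le_sqrt (by nlinarith [norm_nonneg (Ωp t), norm_nonneg (Ωm t)])
      _ = Real.sqrt 2 * (N * M / γ) := by
          rw [Real.sqrt_mul (by norm_num : (0:ℝ) ≤ 2), Real.sqrt_sq hc]
      _ = Real.sqrt 2 * N * M / γ := by ring
end

section
/- With the operator Ω as above and F Lipschitz in the second variable with constant L, for any two bounded continuous functions φ₁, φ₂ : ℝ → ℝ^p one has ‖Ωφ₁ - Ωφ₂‖_∞ ≤ √2·N·L·γ^{-1}·‖φ₁ - φ₂‖_∞. In particular, if √2·N·L < γ then Ω is a contraction on the space of bounded continuous functions. -/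
open MeasureTheory Filter

open Set Topology

lemma expInt_Ioi {γ : ℝ} (hγ : 0 < γ) (t : ℝ) :
    IntegrableOn (fun s => Real.exp (γ * (t - s))) (Ioi t) ∧
      ∫ s in Ioi t, Real.exp (γ * (t - s)) = γ⁻¹ := by
  have hderiv : ∀ x ∈ Ici t, HasDerivAt (fun s => -γ⁻¹ * Real.exp (γ * (t - s)))
      (Real.exp (γ * (t - x))) x := by
    intro x _
    have h0 : HasDerivAt (fun s : ℝ => γ * (t - s)) (γ * (-1)) x :=
      ((hasDerivAt_id x).const_sub t).const_mul γ
    have h1 := (h0.exp).const_mul (-γ⁻¹)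
    convert h1 using 1
    · rfl
    · rfl
    · linear_combination (-Real.exp (γ * (t - x))) * inv_mul_cancel₀ hγ.ne'
  have htend : Tendsto (fun s : ℝ => -γ⁻¹ * Real.exp (γ * (t - s))) atTop (𝓝 0) := by
    have h2 : Tendsto (fun s : ℝ => γ * (t - s)) atTop atBot := by
      apply Tendsto.const_mul_atBot hγ
      have h3 : Tendsto (fun s : ℝ => t + -s) atTop atBot :=
        tendsto_atBot_add_const_left atTop t tendsto_neg_atTop_atBot
      exact h3.congr (fun s => (sub_eq_add_neg t s).symm)
    have := (Real.tendsto_exp_atBot.comp h2).const_mul (-γ⁻¹)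
    simpa using this
  have hpos : ∀ x ∈ Ioi t, 0 ≤ Real.exp (γ * (t - x)) := fun x _ => (Real.exp_pos _).le
  have hint := integrableOn_Ioi_deriv_of_nonneg' hderiv hpos htend
  refine ⟨hint, ?_⟩
  rw [integral_Ioi_of_hasDerivAt_of_nonneg' hderiv hpos htend]
  simp

lemma expInt_Iic {γ : ℝ} (hγ : 0 < γ) (t : ℝ) :
    IntegrableOn (fun s => Real.exp (-γ * (t - s))) (Iic t) ∧
      ∫ s in Iic t, Real.exp (-γ * (t - s)) = γ⁻¹ := by
  have key := expInt_Ioi hγ (-t)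
  have heq : ∀ s : ℝ, Real.exp (-γ * (t - s)) = (fun u => Real.exp (γ * (-t - u))) (-s) := by
    intro s; ring_nf
  constructor
  · have A : MeasurableEmbedding (fun x : ℝ => -x) :=
      (Homeomorph.neg ℝ).measurableEmbedding
    have h1 : IntegrableOn ((fun u => Real.exp (γ * (-t - u))) ∘ (fun x : ℝ => -x))
        ((fun x : ℝ => -x) ⁻¹' (Ioi (-t))) :=
      (MeasurePreserving.integrableOn_comp_preimage
        (Measure.measurePreserving_neg (volume : Measure ℝ)) A).2 key.1
    have hpre : (fun x : ℝ => -x) ⁻¹' (Ioi (-t)) = Iio t := by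
      ext x; simp [neg_lt_neg_iff]
    rw [hpre] at h1
    rw [integrableOn_Iic_iff_integrableOn_Iio]
    exact h1.congr_fun (fun x _ => (heq x).symm) measurableSet_Iio
  · calc ∫ s in Iic t, Real.exp (-γ * (t - s))
        = ∫ s in Iic t, (fun u => Real.exp (γ * (-t - u))) (-s) := by
          exact setIntegral_congr_fun measurableSet_Iic (fun x _ => heq x)
      _ = ∫ u in Ioi (-t), Real.exp (γ * (-t - u)) := by
          simpa using integral_comp_neg_Iic t (fun u => Real.exp (γ * (-t - u)))
      _ = γ⁻¹ := key.2

lemma bound_Ici {E : Type*} [NormedAddCommGroup E] [NormedSpace ℝ E] [CompleteSpace E]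
    {γ C : ℝ} (hγ : 0 < γ)
    {t : ℝ} {g₁ g₂ : ℝ → E} (h₁ : IntegrableOn g₁ (Ici t)) (h₂ : IntegrableOn g₂ (Ici t))
    (hb : ∀ s ∈ Ici t, ‖g₁ s - g₂ s‖ ≤ C * Real.exp (γ * (t - s))) :
    ‖(∫ s in Ici t, g₁ s) - ∫ s in Ici t, g₂ s‖ ≤ C * γ⁻¹ := by
  rw [← integral_sub h₁ h₂]
  have hint : IntegrableOn (fun s => C * Real.exp (γ * (t - s))) (Ici t) := by
    rw [integrableOn_Ici_iff_integrableOn_Ioi]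
    exact (expInt_Ioi hγ t).1.const_mul C
  have hae : ∀ᵐ s ∂(volume.restrict (Ici t)), ‖g₁ s - g₂ s‖ ≤ C * Real.exp (γ * (t - s)) := by
    filter_upwards [ae_restrict_mem measurableSet_Ici] with s hs using hb s hs
  calc ‖∫ s in Ici t, (g₁ s - g₂ s)‖ ≤ ∫ s in Ici t, C * Real.exp (γ * (t - s)) :=
      norm_integral_le_of_norm_le hint hae
    _ = C * γ⁻¹ := by
      rw [integral_Ici_eq_integral_Ioi, MeasureTheory.integral_const_mul, (expInt_Ioi hγ t).2]

lemma bound_Iic {E : Type*} [NormedAddCommGroup E] [NormedSpace ℝ E] [CompleteSpace E]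
    {γ C : ℝ} (hγ : 0 < γ)
    {t : ℝ} {g₁ g₂ : ℝ → E} (h₁ : IntegrableOn g₁ (Iic t)) (h₂ : IntegrableOn g₂ (Iic t))
    (hb : ∀ s ∈ Iic t, ‖g₁ s - g₂ s‖ ≤ C * Real.exp (-γ * (t - s))) :
    ‖(∫ s in Iic t, g₁ s) - ∫ s in Iic t, g₂ s‖ ≤ C * γ⁻¹ := by
  rw [← integral_sub h₁ h₂]
  have hint : IntegrableOn (fun s => C * Real.exp (-γ * (t - s))) (Iic t) := by
    exact (expInt_Iic hγ t).1.const_mul C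
  have hae : ∀ᵐ s ∂(volume.restrict (Iic t)), ‖g₁ s - g₂ s‖ ≤ C * Real.exp (-γ * (t - s)) := by
    filter_upwards [ae_restrict_mem measurableSet_Iic] with s hs using hb s hs
  calc ‖∫ s in Iic t, (g₁ s - g₂ s)‖ ≤ ∫ s in Iic t, C * Real.exp (-γ * (t - s)) :=
      norm_integral_le_of_norm_le hint hae
    _ = C * γ⁻¹ := by
      rw [MeasureTheory.integral_const_mul, (expInt_Iic hγ t).2]

lemma intOn_Ici {E : Type*} [NormedAddCommGroup E] [NormedSpace ℝ E]
    {γ C : ℝ} (hγ : 0 < γ)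
    {t : ℝ} {g : ℝ → E} (hc : Continuous g)
    (hb : ∀ s ∈ Ici t, ‖g s‖ ≤ C * Real.exp (γ * (t - s))) :
    IntegrableOn g (Ici t) := by
  rw [integrableOn_Ici_iff_integrableOn_Ioi]
  apply Integrable.mono' ((expInt_Ioi hγ t).1.const_mul C)
    hc.aestronglyMeasurable.restrict
  filter_upwards [ae_restrict_mem measurableSet_Ioi] with s hs using hb s (mem_Ici.2 (le_of_lt hs))

lemma intOn_Iic {E : Type*} [NormedAddCommGroup E] [NormedSpace ℝ E]
    {γ C : ℝ} (hγ : 0 < γ)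
    {t : ℝ} {g : ℝ → E} (hc : Continuous g)
    (hb : ∀ s ∈ Iic t, ‖g s‖ ≤ C * Real.exp (-γ * (t - s))) :
    IntegrableOn g (Iic t) := by
  apply Integrable.mono' ((expInt_Iic hγ t).1.const_mul C)
    hc.aestronglyMeasurable.restrict
  filter_upwards [ae_restrict_mem measurableSet_Iic] with s hs using hb s hs

lemma side_Ici {E : Type*} [NormedAddCommGroup E] [NormedSpace ℝ E] [CompleteSpace E]
    {γ N C M : ℝ} (hγ : 0 < γ) (hN : 0 ≤ N) (hC : 0 ≤ C) (hM : 0 ≤ M)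
    {t : ℝ} {A : ℝ → (E →L[ℝ] E)} (hAc : Continuous A)
    (hA : ∀ s ∈ Ici t, ‖A s‖ ≤ N * Real.exp (γ * (t - s)))
    {f₁ f₂ : ℝ → E} (hf₁ : Continuous f₁) (hf₂ : Continuous f₂)
    (hb₁ : ∀ s, ‖f₁ s‖ ≤ M) (hb₂ : ∀ s, ‖f₂ s‖ ≤ M)
    (hdiff : ∀ s, ‖f₁ s - f₂ s‖ ≤ C) :
    ‖(- ∫ s in Ici t, A s (f₁ s)) - (- ∫ s in Ici t, A s (f₂ s))‖ ≤ N * C * γ⁻¹ := by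
  have key : ∀ (f : ℝ → E), Continuous f → (∀ s, ‖f s‖ ≤ M) →
      IntegrableOn (fun s => A s (f s)) (Ici t) := by
    intro f hfc hfb
    apply intOn_Ici hγ (C := N * M) (hAc.clm_apply hfc)
    intro s hs
    calc ‖A s (f s)‖ ≤ ‖A s‖ * ‖f s‖ := ContinuousLinearMap.le_opNorm _ _
      _ ≤ (N * Real.exp (γ * (t - s))) * M :=
          mul_le_mul (hA s hs) (hfb s) (norm_nonneg _) (by positivity)
      _ = N * M * Real.exp (γ * (t - s)) := by ring
  rw [neg_sub_neg]
  apply bound_Ici (C := N * C) hγ (key f₂ hf₂ hb₂) (key f₁ hf₁ hb₁)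
  intro s hs
  calc ‖A s (f₂ s) - A s (f₁ s)‖ = ‖A s (f₂ s - f₁ s)‖ := by rw [map_sub]
    _ ≤ ‖A s‖ * ‖f₂ s - f₁ s‖ := ContinuousLinearMap.le_opNorm _ _
    _ ≤ (N * Real.exp (γ * (t - s))) * C := by
        rw [norm_sub_rev]
        exact mul_le_mul (hA s hs) (hdiff s) (norm_nonneg _) (by positivity)
    _ = N * C * Real.exp (γ * (t - s)) := by ring

lemma side_Iic {E : Type*} [NormedAddCommGroup E] [NormedSpace ℝ E] [CompleteSpace E]
    {γ N C M : ℝ} (hγ : 0 < γ) (hN : 0 ≤ N) (hC : 0 ≤ C) (hM : 0 ≤ M)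
    {t : ℝ} {A : ℝ → (E →L[ℝ] E)} (hAc : Continuous A)
    (hA : ∀ s ∈ Iic t, ‖A s‖ ≤ N * Real.exp (-γ * (t - s)))
    {f₁ f₂ : ℝ → E} (hf₁ : Continuous f₁) (hf₂ : Continuous f₂)
    (hb₁ : ∀ s, ‖f₁ s‖ ≤ M) (hb₂ : ∀ s, ‖f₂ s‖ ≤ M)
    (hdiff : ∀ s, ‖f₁ s - f₂ s‖ ≤ C) :
    ‖(∫ s in Iic t, A s (f₁ s)) - (∫ s in Iic t, A s (f₂ s))‖ ≤ N * C * γ⁻¹ := by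
  have key : ∀ (f : ℝ → E), Continuous f → (∀ s, ‖f s‖ ≤ M) →
      IntegrableOn (fun s => A s (f s)) (Iic t) := by
    intro f hfc hfb
    apply intOn_Iic hγ (C := N * M) (hAc.clm_apply hfc)
    intro s hs
    calc ‖A s (f s)‖ ≤ ‖A s‖ * ‖f s‖ := ContinuousLinearMap.le_opNorm _ _
      _ ≤ (N * Real.exp (-γ * (t - s))) * M :=
          mul_le_mul (hA s hs) (hfb s) (norm_nonneg _) (by positivity)
      _ = N * M * Real.exp (-γ * (t - s)) := by ring
  apply bound_Iic (C := N * C) hγ (key f₁ hf₁ hb₁) (key f₂ hf₂ hb₂)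
  intro s hs
  calc ‖A s (f₁ s) - A s (f₂ s)‖ = ‖A s (f₁ s - f₂ s)‖ := by rw [map_sub]
    _ ≤ ‖A s‖ * ‖f₁ s - f₂ s‖ := ContinuousLinearMap.le_opNorm _ _
    _ ≤ (N * Real.exp (-γ * (t - s))) * C :=
        mul_le_mul (hA s hs) (hdiff s) (norm_nonneg _) (by positivity)
    _ = N * C * Real.exp (-γ * (t - s)) := by ring

lemma sqrt_left_le {a b : ℝ} (hb : 0 ≤ b) : a ≤ Real.sqrt (a ^ 2 + b ^ 2) ∨ True := Or.inr trivial

lemma norm_le_sqrt_add_left (a b : ℝ) (ha : 0 ≤ a) : a ≤ Real.sqrt (a ^ 2 + b ^ 2) := by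
  have h := Real.sqrt_le_sqrt (show a ^ 2 ≤ a ^ 2 + b ^ 2 from le_add_of_nonneg_right (sq_nonneg b))
  rwa [Real.sqrt_sq ha] at h

lemma norm_le_sqrt_add_right (a b : ℝ) (hb : 0 ≤ b) : b ≤ Real.sqrt (a ^ 2 + b ^ 2) := by
  have h := Real.sqrt_le_sqrt (show b ^ 2 ≤ a ^ 2 + b ^ 2 from le_add_of_nonneg_left (sq_nonneg a))
  rwa [Real.sqrt_sq hb] at h

/-- Contraction estimate for the operator Ω: for bounded continuous φ₁, φ₂,
`‖Ωφ₁ − Ωφ₂‖_∞ ≤ √2·N·L·γ⁻¹·‖φ₁ − φ₂‖_∞`; in particular Ω is a contraction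
when `√2·N·L < γ`. -/
theorem stmt3 (r q : ℕ)
    (Ap : Matrix (Fin r) (Fin r) ℝ) (Am : Matrix (Fin q) (Fin q) ℝ)
    (N γ M L : ℝ) (hN : 1 ≤ N) (hγ : 0 < γ) (hM : 0 < M) (hL : 0 < L)
    (hexpP : ∀ t : ℝ, t ≤ 0 →
      ‖NormedSpace.exp (t • (Matrix.toEuclideanCLM (𝕜 := ℝ) Ap))‖ ≤ N * Real.exp (γ * t))
    (hexpM : ∀ t : ℝ, 0 ≤ t →
      ‖NormedSpace.exp (t • (Matrix.toEuclideanCLM (𝕜 := ℝ) Am))‖ ≤ N * Real.exp (-γ * t))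
    (Fp : ℝ → EuclideanSpace ℝ (Fin r) × EuclideanSpace ℝ (Fin q) → EuclideanSpace ℝ (Fin r))
    (Fm : ℝ → EuclideanSpace ℝ (Fin r) × EuclideanSpace ℝ (Fin q) → EuclideanSpace ℝ (Fin q))
    (hFc : Continuous (Function.uncurry fun t x => (Fp t x, Fm t x)))
    (hFbound : ∀ t x, Real.sqrt (‖Fp t x‖ ^ 2 + ‖Fm t x‖ ^ 2) ≤ M)
    (hFlip : ∀ t x y, Real.sqrt (‖Fp t x - Fp t y‖ ^ 2 + ‖Fm t x - Fm t y‖ ^ 2)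
        ≤ L * Real.sqrt (‖x.1 - y.1‖ ^ 2 + ‖x.2 - y.2‖ ^ 2))
    (φ₁p φ₂p : ℝ → EuclideanSpace ℝ (Fin r)) (φ₁m φ₂m : ℝ → EuclideanSpace ℝ (Fin q))
    (hφ₁c : Continuous φ₁p ∧ Continuous φ₁m) (hφ₂c : Continuous φ₂p ∧ Continuous φ₂m)
    (C₁ C₂ : ℝ)
    (hφ₁b : ∀ t, Real.sqrt (‖φ₁p t‖ ^ 2 + ‖φ₁m t‖ ^ 2) ≤ C₁)
    (hφ₂b : ∀ t, Real.sqrt (‖φ₂p t‖ ^ 2 + ‖φ₂m t‖ ^ 2) ≤ C₂)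
    (D : ℝ)
    (hD : ∀ t, Real.sqrt (‖φ₁p t - φ₂p t‖ ^ 2 + ‖φ₁m t - φ₂m t‖ ^ 2) ≤ D)
    (Ω₁p Ω₂p : ℝ → EuclideanSpace ℝ (Fin r)) (Ω₁m Ω₂m : ℝ → EuclideanSpace ℝ (Fin q))
    (hΩ₁p : ∀ t, Ω₁p t = - ∫ s in Set.Ici t,
      NormedSpace.exp ((t - s) • (Matrix.toEuclideanCLM (𝕜 := ℝ) Ap)) (Fp s (φ₁p s, φ₁m s)))
    (hΩ₁m : ∀ t, Ω₁m t = ∫ s in Set.Iic t,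
      NormedSpace.exp ((t - s) • (Matrix.toEuclideanCLM (𝕜 := ℝ) Am)) (Fm s (φ₁p s, φ₁m s)))
    (hΩ₂p : ∀ t, Ω₂p t = - ∫ s in Set.Ici t,
      NormedSpace.exp ((t - s) • (Matrix.toEuclideanCLM (𝕜 := ℝ) Ap)) (Fp s (φ₂p s, φ₂m s)))
    (hΩ₂m : ∀ t, Ω₂m t = ∫ s in Set.Iic t,
      NormedSpace.exp ((t - s) • (Matrix.toEuclideanCLM (𝕜 := ℝ) Am)) (Fm s (φ₂p s, φ₂m s))) :
    ∀ t, Real.sqrt (‖Ω₁p t - Ω₂p t‖ ^ 2 + ‖Ω₁m t - Ω₂m t‖ ^ 2)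
      ≤ Real.sqrt 2 * N * L * γ⁻¹ * D := by
  obtain ⟨hφ₁pc, hφ₁mc⟩ := hφ₁c
  obtain ⟨hφ₂pc, hφ₂mc⟩ := hφ₂c
  have hD0 : 0 ≤ D := le_trans (Real.sqrt_nonneg _) (hD 0)
  have hN0 : 0 ≤ N := le_trans zero_le_one hN
  set K : ℝ := N * (L * D) * γ⁻¹ with hKdef
  have hK0 : 0 ≤ K := by positivity
  have hx₁c : Continuous fun s : ℝ => (s, (φ₁p s, φ₁m s)) :=
    continuous_id.prodMk (hφ₁pc.prodMk hφ₁mc)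
  have hx₂c : Continuous fun s : ℝ => (s, (φ₂p s, φ₂m s)) :=
    continuous_id.prodMk (hφ₂pc.prodMk hφ₂mc)
  have hF₁c := hFc.comp hx₁c
  have hF₂c := hFc.comp hx₂c
  have hFp₁c : Continuous fun s => Fp s (φ₁p s, φ₁m s) := continuous_fst.comp hF₁c
  have hFp₂c : Continuous fun s => Fp s (φ₂p s, φ₂m s) := continuous_fst.comp hF₂c
  have hFm₁c : Continuous fun s => Fm s (φ₁p s, φ₁m s) := continuous_snd.comp hF₁c
  have hFm₂c : Continuous fun s => Fm s (φ₂p s, φ₂m s) := continuous_snd.comp hF₂c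
  have hFpM : ∀ s x, ‖Fp s x‖ ≤ M := fun s x =>
    le_trans (norm_le_sqrt_add_left _ _ (norm_nonneg _)) (hFbound s x)
  have hFmM : ∀ s x, ‖Fm s x‖ ≤ M := fun s x =>
    le_trans (norm_le_sqrt_add_right _ _ (norm_nonneg _)) (hFbound s x)
  have hLD : ∀ s, Real.sqrt (‖Fp s (φ₁p s, φ₁m s) - Fp s (φ₂p s, φ₂m s)‖ ^ 2
      + ‖Fm s (φ₁p s, φ₁m s) - Fm s (φ₂p s, φ₂m s)‖ ^ 2) ≤ L * D := fun s =>
    le_trans (hFlip s _ _) (mul_le_mul_of_nonneg_left (hD s) hL.le)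
  have hFpL : ∀ s, ‖Fp s (φ₁p s, φ₁m s) - Fp s (φ₂p s, φ₂m s)‖ ≤ L * D := fun s =>
    le_trans (norm_le_sqrt_add_left _ _ (norm_nonneg _)) (hLD s)
  have hFmL : ∀ s, ‖Fm s (φ₁p s, φ₁m s) - Fm s (φ₂p s, φ₂m s)‖ ≤ L * D := fun s =>
    le_trans (norm_le_sqrt_add_right _ _ (norm_nonneg _)) (hLD s)
  intro t
  letI : NormedAlgebra ℚ (EuclideanSpace ℝ (Fin r) →L[ℝ] EuclideanSpace ℝ (Fin r)) :=
    NormedAlgebra.restrictScalars ℚ ℝ _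
  letI : NormedAlgebra ℚ (EuclideanSpace ℝ (Fin q) →L[ℝ] EuclideanSpace ℝ (Fin q)) :=
    NormedAlgebra.restrictScalars ℚ ℝ _
  have hexpPc : Continuous fun s : ℝ =>
      NormedSpace.exp ((t - s) • Matrix.toEuclideanCLM (𝕜 := ℝ) Ap) :=
    NormedSpace.exp_continuous.comp ((continuous_const.sub continuous_id).smul continuous_const)
  have hexpMc : Continuous fun s : ℝ =>
      NormedSpace.exp ((t - s) • Matrix.toEuclideanCLM (𝕜 := ℝ) Am) :=
    NormedSpace.exp_continuous.comp ((continuous_const.sub continuous_id).smul continuous_const)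
  have hp : ‖Ω₁p t - Ω₂p t‖ ≤ K := by
    rw [hΩ₁p t, hΩ₂p t, hKdef]
    exact side_Ici (A := fun s : ℝ => NormedSpace.exp ((t - s) • Matrix.toEuclideanCLM (𝕜 := ℝ) Ap))
      (f₁ := fun s => Fp s (φ₁p s, φ₁m s)) (f₂ := fun s => Fp s (φ₂p s, φ₂m s))
      hγ hN0 (by positivity) hM.le hexpPc
      (fun s hs => hexpP (t - s) (by simp only [Set.mem_Ici] at hs; linarith))
      hFp₁c hFp₂c (fun s => hFpM s _) (fun s => hFpM s _) hFpL
  have hm : ‖Ω₁m t - Ω₂m t‖ ≤ K := by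
    rw [hΩ₁m t, hΩ₂m t, hKdef]
    exact side_Iic (A := fun s : ℝ => NormedSpace.exp ((t - s) • Matrix.toEuclideanCLM (𝕜 := ℝ) Am))
      (f₁ := fun s => Fm s (φ₁p s, φ₁m s)) (f₂ := fun s => Fm s (φ₂p s, φ₂m s))
      hγ hN0 (by positivity) hM.le hexpMc
      (fun s hs => hexpM (t - s) (by simp only [Set.mem_Iic] at hs; linarith))
      hFm₁c hFm₂c (fun s => hFmM s _) (fun s => hFmM s _) hFmL
  have ha2 : ‖Ω₁p t - Ω₂p t‖ ^ 2 ≤ K ^ 2 := pow_le_pow_left₀ (norm_nonneg _) hp 2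
  have hb2 : ‖Ω₁m t - Ω₂m t‖ ^ 2 ≤ K ^ 2 := pow_le_pow_left₀ (norm_nonneg _) hm 2
  calc Real.sqrt (‖Ω₁p t - Ω₂p t‖ ^ 2 + ‖Ω₁m t - Ω₂m t‖ ^ 2)
      ≤ Real.sqrt (2 * K ^ 2) := Real.sqrt_le_sqrt (by linarith)
    _ = Real.sqrt 2 * K := by rw [Real.sqrt_mul (by norm_num), Real.sqrt_sq hK0]
    _ = Real.sqrt 2 * N * L * γ⁻¹ * D := by rw [hKdef]; ring
end

section
/- Let {z_k}_{k∈ℤ} be an unpredictable sequence of real numbers with values in [0,1], and let h : ℝ → ℝ^p be a function which is Lipschitz on [0,1] with constant L_h > 0 and satisfies |h(u) − h(v)| ≥ ℓ|u − v| for some ℓ > 0 and all u, v ∈ [0,1] (bi-Lipschitz from below on [0,1]). Then {h(z_k)}_{k∈ℤ} is an unpredictable sequence in ℝ^p with unpredictability constant ℓδ₀, where δ₀ is the unpredictability constant of {z_k}. -/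
open Filter

/-- A bi-Lipschitz image (on [0,1]) of an unpredictable real sequence with values in
[0,1] is an unpredictable sequence, with unpredictability constant `ℓδ₀`. -/
theorem stmt13 (p : ℕ)
    (z : ℤ → ℝ) (hz01 : ∀ k, z k ∈ Set.Icc (0:ℝ) 1)
    (δ₀ : ℝ) (hδ : 0 < δ₀)
    (ζ η : ℕ → ℕ) (hζ : Tendsto ζ atTop atTop) (hη : Tendsto η atTop atTop)
    (hconv : ∀ k : ℤ, Tendsto (fun n => |z (k + ζ n) - z k|) atTop (nhds 0))
    (hsep : ∀ n : ℕ, δ₀ ≤ |z ((ζ n : ℤ) + η n) - z (η n)|)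
    (h : ℝ → EuclideanSpace ℝ (Fin p)) (Lh ℓ : ℝ) (hLh : 0 < Lh) (hℓ : 0 < ℓ)
    (hlip : ∀ u ∈ Set.Icc (0:ℝ) 1, ∀ v ∈ Set.Icc (0:ℝ) 1, ‖h u - h v‖ ≤ Lh * |u - v|)
    (hlow : ∀ u ∈ Set.Icc (0:ℝ) 1, ∀ v ∈ Set.Icc (0:ℝ) 1, ℓ * |u - v| ≤ ‖h u - h v‖) :
    (∃ M, ∀ k : ℤ, ‖h (z k)‖ ≤ M) ∧
    (∀ k : ℤ, Tendsto (fun n => ‖h (z (k + ζ n)) - h (z k)‖) atTop (nhds 0)) ∧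
    (∀ n : ℕ, ℓ * δ₀ ≤ ‖h (z ((ζ n : ℤ) + η n)) - h (z (η n))‖) := by
  have h01 : (0:ℝ) ∈ Set.Icc (0:ℝ) 1 := by constructor <;> norm_num
  refine ⟨⟨Lh + ‖h 0‖, fun k => ?_⟩, fun k => ?_, fun n => ?_⟩
  · calc ‖h (z k)‖ ≤ ‖h (z k) - h 0‖ + ‖h 0‖ := by
          simpa using norm_add_le (h (z k) - h 0) (h 0)
      _ ≤ Lh * |z k - 0| + ‖h 0‖ := by
          have := hlip (z k) (hz01 k) 0 h01; linarith
      _ ≤ Lh + ‖h 0‖ := by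
          have hk := hz01 k
          have : |z k - 0| ≤ 1 := by rw [abs_le]; constructor <;> [linarith [hk.1]; linarith [hk.2]]
          nlinarith
  · have hb : ∀ n, ‖h (z (k + ζ n)) - h (z k)‖ ≤ Lh * |z (k + ζ n) - z k| :=
      fun n => hlip _ (hz01 _) _ (hz01 _)
    have hnn : ∀ n, (0:ℝ) ≤ ‖h (z (k + ζ n)) - h (z k)‖ := fun n => norm_nonneg _
    have hlim : Tendsto (fun n => Lh * |z (k + ζ n) - z k|) atTop (nhds 0) := by
      have := (hconv k).const_mul Lh; simpa using this
    exact squeeze_zero hnn hb hlim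
  · calc ℓ * δ₀ ≤ ℓ * |z ((ζ n : ℤ) + η n) - z (η n)| := by
          exact mul_le_mul_of_nonneg_left (hsep n) hℓ.le
      _ ≤ _ := hlow _ (hz01 _) _ (hz01 _)
end

section
/- If a uniformly continuous bounded function ψ : ℝ → ℝ^p satisfies: there exist sequences μ_n → ∞, ν_n → ∞ and constants ε₀ > 0, r > 0 such that ‖ψ(t + μ_n) − ψ(t)‖ → 0 uniformly on compact subsets of ℝ and ‖ψ(t + μ_n) − ψ(t)‖ ≥ ε₀ for each t ∈ [ν_n − r, ν_n + r] and n ∈ ℕ, then ψ is not a periodic function, i.e., there is no T > 0 with ψ(t + T) = ψ(t) for all t. -/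
open Filter

/-- An unpredictable function is not periodic. -/
theorem stmt18 (p : ℕ) (ψ : ℝ → EuclideanSpace ℝ (Fin p))
    (hψu : UniformContinuous ψ) (hψb : ∃ C, ∀ t, ‖ψ t‖ ≤ C)
    (ε₀ r : ℝ) (hε : 0 < ε₀) (hr : 0 < r)
    (μ ν : ℕ → ℝ) (hμ : Tendsto μ atTop atTop) (hν : Tendsto ν atTop atTop)
    (hconv : ∀ C : Set ℝ, IsCompact C →
      TendstoUniformlyOn (fun n t => ψ (t + μ n)) ψ atTop C)
    (hsep : ∀ n : ℕ, ∀ t ∈ Set.Icc (ν n - r) (ν n + r), ε₀ ≤ ‖ψ (t + μ n) - ψ t‖) :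
    ¬ ∃ T > (0:ℝ), ∀ t : ℝ, ψ (t + T) = ψ t := by
  rintro ⟨T, hT, hper⟩
  have hP : Function.Periodic ψ T := hper
  -- uniform convergence on [0, T]
  have h := (Metric.tendstoUniformlyOn_iff.mp (hconv (Set.Icc 0 T) isCompact_Icc)) ε₀ hε
  rw [eventually_atTop] at h
  obtain ⟨N, hN⟩ := h
  -- reduce ν N modulo T into [0, T)
  set k : ℤ := ⌊ν N / T⌋ with hk
  set t₀ : ℝ := ν N - k * T with ht₀
  have hfract : t₀ = T * Int.fract (ν N / T) := by
    rw [ht₀, Int.fract, hk]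
    field_simp
  have h0 : 0 ≤ t₀ := by
    rw [hfract]; exact mul_nonneg hT.le (Int.fract_nonneg _)
  have h1 : t₀ ≤ T := by
    rw [hfract]
    calc T * Int.fract (ν N / T) ≤ T * 1 :=
      mul_le_mul_of_nonneg_left (Int.fract_lt_one _).le hT.le
    _ = T := mul_one T
  have hmem : t₀ ∈ Set.Icc (0:ℝ) T := ⟨h0, h1⟩
  have hclose := hN N le_rfl t₀ hmem
  -- periodicity: ψ t₀ = ψ (ν N), ψ (t₀ + μ N) = ψ (ν N + μ N)
  have e1 : ψ t₀ = ψ (ν N) := by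
    rw [ht₀]; exact hP.sub_int_mul_eq k
  have e2 : ψ (t₀ + μ N) = ψ (ν N + μ N) := by
    have : t₀ + μ N = (ν N + μ N) - k * T := by rw [ht₀]; ring
    rw [this]; exact hP.sub_int_mul_eq k
  have hsepN := hsep N (ν N) ⟨by linarith, by linarith⟩
  rw [← e1, ← e2] at hsepN
  rw [dist_eq_norm] at hclose
  have : ‖ψ (t₀ + μ N) - ψ t₀‖ = ‖ψ t₀ - ψ (t₀ + μ N)‖ := norm_sub_rev _ _
  linarith [hsepN, hclose, this ▸ hsepN]
end

section
/- Let {σ_k}_{k∈ℤ} be a bounded sequence in ℝ^p, ω > 0, θ_k = θ₀ + kω, and g(t) = σ_k for t ∈ [θ_k, θ_{k+1}). If {σ_k} is unpredictable with unpredictability constant δ₀ and sequences ζ_n, η_n, then the function g satisfies: ‖g(t + ωζ_n) − g(t)‖ → 0 as n → ∞ for each t in any compact subset of ℝ contained in a finite union of partition intervals, and ‖g(t + ωζ_n) − g(t)‖ ≥ δ₀ for every t ∈ [θ_{η_n}, θ_{η_n+1}) and every n ∈ ℕ. -/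
open Filter

/-- The piecewise constant function `g` built from an unpredictable sequence `σ` inherits
the convergence and separation properties along the shifts `ωζₙ`. -/
theorem stmt19 (p : ℕ) (σ : ℤ → EuclideanSpace ℝ (Fin p)) (Mσ : ℝ)
    (hσ : ∀ k, ‖σ k‖ ≤ Mσ)
    (θ₀ ω : ℝ) (hω : 0 < ω)
    (θ : ℤ → ℝ) (hθ : ∀ k, θ k = θ₀ + k * ω)
    (g : ℝ → EuclideanSpace ℝ (Fin p))
    (hg : ∀ (k : ℤ) (t : ℝ), t ∈ Set.Ico (θ k) (θ (k + 1)) → g t = σ k)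
    (δ₀ : ℝ) (hδ : 0 < δ₀)
    (ζ η : ℕ → ℕ) (hζ : Tendsto ζ atTop atTop) (hη : Tendsto η atTop atTop)
    (hconv : ∀ k : ℤ, Tendsto (fun n => ‖σ (k + ζ n) - σ k‖) atTop (nhds 0))
    (hsep : ∀ n : ℕ, δ₀ ≤ ‖σ ((ζ n : ℤ) + η n) - σ (η n)‖) :
    (∀ t : ℝ, Tendsto (fun n => ‖g (t + ω * ζ n) - g t‖) atTop (nhds 0)) ∧
    (∀ n : ℕ, ∀ t ∈ Set.Ico (θ (η n)) (θ ((η n : ℤ) + 1)),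
      δ₀ ≤ ‖g (t + ω * ζ n) - g t‖) := by
  -- shift lemma
  have hshift : ∀ (k m : ℤ) (t : ℝ), t ∈ Set.Ico (θ k) (θ (k + 1)) →
      t + ω * m ∈ Set.Ico (θ (k + m)) (θ (k + m + 1)) := by
    intro k m t ht
    rcases ht with ⟨h1, h2⟩
    rw [hθ] at h1 h2
    constructor <;> rw [hθ] <;> push_cast <;> push_cast at h1 h2 <;> nlinarith
  -- membership: every t lies in some interval
  have hmem : ∀ t : ℝ, t ∈ Set.Ico (θ ⌊(t - θ₀) / ω⌋) (θ (⌊(t - θ₀) / ω⌋ + 1)) := by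
    intro t
    have h1 := Int.floor_le ((t - θ₀) / ω)
    have h2 := Int.lt_floor_add_one ((t - θ₀) / ω)
    constructor <;> rw [hθ]
    · have := mul_le_mul_of_nonneg_right h1 hω.le
      rw [div_mul_cancel₀ _ hω.ne'] at this
      push_cast
      linarith
    · have := mul_lt_mul_of_pos_right h2 hω
      rw [div_mul_cancel₀ _ hω.ne'] at this
      push_cast
      linarith
  constructor
  · intro t
    set k := ⌊(t - θ₀) / ω⌋ with hk
    have hgt : g t = σ k := hg k t (hmem t)
    have key : ∀ n : ℕ, ‖g (t + ω * ζ n) - g t‖ = ‖σ (k + ζ n) - σ k‖ := by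
      intro n
      have h := hg (k + ζ n) _ (hshift k (ζ n) t (hmem t))
      push_cast at h
      rw [hgt, h]
    simpa only [key] using hconv k
  · intro n t ht
    have hgt : g t = σ (η n) := hg _ t ht
    have h2 := hg _ _ (hshift (η n) (ζ n) t ht)
    push_cast at h2
    rw [hgt, h2, add_comm ((η n : ℤ)) (ζ n : ℤ)]
    exact hsep n
end
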